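/- arXiv:1110.2808 — 6 statements merged into one kernel-verified Lean document; each statement's English description precedes it below -/
import Mathlib

section
/- Let g : ℂ → ℂ be continuously differentiable (over ℝ) and let w ∈ ℂ. Define S(z) = exp(g(w) − g(z)) / (π (z − w)) for z ≠ w. Then for every continuously differentiable, compactly supported φ : ℂ → ℂ, the function z ↦ S(z)·(−∂̄φ(z) + ∂̄g(z)·φ(z)) is integrable on ℂ and ∫_ℂ S(z)·(−∂̄φ(z) + ∂̄g(z)·φ(z)) dA(z) = φ(w). (In other words, S is an inverting kernel for the perturbed Cauchy–Riemann operator ∂̄ + α with α = (∂̄g) d z̄: one has (∂̄ + ∂̄g) S = δ_w in the sense of distributions.) -/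
open Filter Topology MeasureTheory

/-- Wirtinger derivative `∂̄f(z) = ½(∂ₓf(z) + i ∂ᵧf(z))`, where `∂ₓf(z)` and `∂ᵧf(z)`
are the real-Fréchet derivatives of `f` at `z` in the directions `1` and `i`. -/
noncomputable def dbar (f : ℂ → ℂ) (z : ℂ) : ℂ :=
  (1 / 2) * (fderiv ℝ f z 1 + Complex.I * fderiv ℝ f z Complex.I)

lemma dbar_eq (f : ℂ → ℂ) {f' : ℂ →L[ℝ] ℂ} {z : ℂ} (h : HasFDerivAt f f' z) :
    dbar f z = (1 / 2) * (f' 1 + Complex.I * f' Complex.I) := by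
  rw [dbar, h.fderiv]

lemma dbar_mul (f h : ℂ → ℂ) (z : ℂ) (hf : DifferentiableAt ℝ f z)
    (hh : DifferentiableAt ℝ h z) :
    dbar (fun z => f z * h z) z = f z * dbar h z + h z * dbar f z := by
  rw [dbar_eq (fun z => f z * h z) (hf.hasFDerivAt.mul hh.hasFDerivAt), dbar, dbar]
  simp only [ContinuousLinearMap.add_apply, ContinuousLinearMap.smul_apply, smul_eq_mul]
  ring

lemma dbar_cexp (u : ℂ → ℂ) (z : ℂ) (hu : DifferentiableAt ℝ u z) :
    dbar (fun z => Complex.exp (u z)) z = Complex.exp (u z) * dbar u z := by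
  rw [dbar_eq _ hu.hasFDerivAt.cexp, dbar]
  simp only [ContinuousLinearMap.smul_apply, smul_eq_mul]
  ring

lemma dbar_const_sub (a : ℂ) (g : ℂ → ℂ) (z : ℂ) (hg : DifferentiableAt ℝ g z) :
    dbar (fun z => a - g z) z = - dbar g z := by
  rw [dbar_eq _ (hg.hasFDerivAt.const_sub a), dbar]
  simp only [ContinuousLinearMap.neg_apply]
  ring

lemma aux1 {G : ℝ → ℂ} (hG : Continuous G) {R : ℝ} (hR : 0 < R)
    (h0 : ∀ r : ℝ, R < r → G r = 0) : IntegrableOn G (Set.Ioi (0:ℝ)) := by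
  have h1 : IntegrableOn G (Set.Ioc (0:ℝ) R) :=
    (hG.continuousOn.integrableOn_compact isCompact_Icc).mono_set Set.Ioc_subset_Icc_self
  have h2 : IntegrableOn G (Set.Ioi R) :=
    (integrableOn_zero (ε' := ℂ)).congr_fun (fun r hr => (h0 r hr).symm)
      measurableSet_Ioi
  rw [show Set.Ioi (0:ℝ) = Set.Ioc 0 R ∪ Set.Ioi R from (Set.Ioc_union_Ioi_eq_Ioi hR.le).symm]
  exact h1.union h2

lemma aux2 {G : ℝ × ℝ → ℂ} (hG : Continuous G) {R : ℝ} (hR : 0 < R)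
    (h0 : ∀ p : ℝ × ℝ, R < p.1 → G p = 0) :
    IntegrableOn G (Set.Ioi (0:ℝ) ×ˢ Set.Ioo (-Real.pi) Real.pi) := by
  have h1 : IntegrableOn G (Set.Ioc (0:ℝ) R ×ˢ Set.Ioo (-Real.pi) Real.pi) :=
    (hG.continuousOn.integrableOn_compact (isCompact_Icc.prod isCompact_Icc)).mono_set
      (Set.prod_mono Set.Ioc_subset_Icc_self Set.Ioo_subset_Icc_self)
  have h2 : IntegrableOn G (Set.Ioi R ×ˢ Set.Ioo (-Real.pi) Real.pi) :=
    (integrableOn_zero (ε' := ℂ)).congr_fun (fun p hp => (h0 p hp.1).symm)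
      (measurableSet_Ioi.prod measurableSet_Ioo)
  rw [show Set.Ioi (0:ℝ) = Set.Ioc 0 R ∪ Set.Ioi R from (Set.Ioc_union_Ioi_eq_Ioi hR.le).symm,
    Set.union_prod]
  exact h1.union h2


lemma integrable_of_polar {f : ℂ → ℂ}
    (h : IntegrableOn (fun p : ℝ × ℝ => p.1 • f (Complex.polarCoord.symm p))
      polarCoord.target volume) :
    Integrable f volume := by
  set B : ℝ × ℝ → ℝ × ℝ →L[ℝ] ℝ × ℝ := fun p =>
    LinearMap.toContinuousLinearMap (Matrix.toLin (Module.Basis.finTwoProd ℝ) (Module.Basis.finTwoProd ℝ)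
      !![Real.cos p.2, -p.1 * Real.sin p.2; Real.sin p.2, p.1 * Real.cos p.2]) with hB
  have A : ∀ p ∈ polarCoord.target,
      HasFDerivWithinAt polarCoord.symm (B p) polarCoord.target p := fun p _ =>
    (hasFDerivAt_polarCoord_symm p).hasFDerivWithinAt
  have B_det : ∀ p, (B p).det = p.1 := by
    intro p
    conv_rhs => rw [← one_mul p.1, ← Real.cos_sq_add_sin_sq p.2]
    simp only [hB, neg_mul, LinearMap.det_toContinuousLinearMap, LinearMap.det_toLin,
      Matrix.det_fin_two_of, sub_neg_eq_add]
    ring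
  set G : ℝ × ℝ → ℂ := fun p => f (Complex.measurableEquivRealProd.symm p) with hG
  have h' : IntegrableOn (fun p => |(B p).det| • G (polarCoord.symm p)) polarCoord.target := by
    refine h.congr_fun (fun p hp => ?_) polarCoord.open_target.measurableSet
    rw [B_det, abs_of_pos hp.1]
    rfl
  have h2 := (integrableOn_image_iff_integrableOn_abs_det_fderiv_smul volume
      polarCoord.open_target.measurableSet A polarCoord.symm.injOn G).mpr h'
  rw [polarCoord.symm_image_target_eq_source] at h2
  have h3 : Integrable G := by
    rw [← integrableOn_univ]
    rwa [IntegrableOn, Measure.restrict_congr_set polarCoord_source_ae_eq_univ] at h2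
  have h4 := (Complex.volume_preserving_equiv_real_prod.integrable_comp_emb
      Complex.measurableEquivRealProd.measurableEmbedding).2 h3
  have : G ∘ Complex.measurableEquivRealProd = f := by
    funext z
    simp [hG]
  rwa [this] at h4

section pomp

variable (ψ : ℂ → ℂ) (w : ℂ)

private noncomputable def cc : ℝ → ℂ := fun θ => Complex.exp (θ * Complex.I)

private noncomputable def LL : ℝ × ℝ → (ℂ →L[ℝ] ℂ) :=
  fun p => fderiv ℝ ψ (w + p.1 • cc p.2)

private noncomputable def AA : ℝ × ℝ → ℂ := fun p => LL ψ w p (cc p.2)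

private noncomputable def BB : ℝ × ℝ → ℂ :=
  fun p => Complex.I * LL ψ w p (Complex.I * cc p.2)

private noncomputable def FF : ℂ → ℂ := fun z => dbar ψ (w + z) / ((Real.pi : ℂ) * z)

private noncomputable def HH : ℝ × ℝ → ℂ :=
  fun p => (1 / (2 * (Real.pi : ℂ))) * (AA ψ w p + BB ψ w p)

lemma cc_cont : Continuous cc :=
  Complex.continuous_exp.comp (Complex.continuous_ofReal.mul continuous_const)

lemma cc_norm (θ : ℝ) : ‖cc θ‖ = 1 := by
  rw [cc, Complex.norm_exp]
  simp

lemma cc_ne (θ : ℝ) : cc θ ≠ 0 := Complex.exp_ne_zero _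

lemma cc_val (θ : ℝ) : cc θ = (Real.cos θ : ℂ) + (Real.sin θ : ℂ) * Complex.I := by
  rw [cc, Complex.exp_mul_I, Complex.ofReal_cos, Complex.ofReal_sin]

lemma cc_pi : cc Real.pi = -1 := by rw [cc, Complex.exp_pi_mul_I]

lemma cc_neg_pi : cc (-Real.pi) = -1 := by
  rw [cc]
  push_cast
  rw [neg_mul, Complex.exp_neg, Complex.exp_pi_mul_I]
  norm_num

lemma hsymm_eq (p : ℝ × ℝ) : Complex.polarCoord.symm p = p.1 • cc p.2 := by
  rw [Complex.polarCoord_symm_apply, Complex.real_smul, cc_val]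

end pomp

lemma pompeiu (ψ : ℂ → ℂ) (hψ : ContDiff ℝ 1 ψ) (hcs : HasCompactSupport ψ) (w : ℂ) :
    Integrable (fun z : ℂ => dbar ψ z / ((Real.pi : ℂ) * (z - w))) volume ∧
    ∫ z : ℂ, dbar ψ z / ((Real.pi : ℂ) * (z - w)) = - ψ w := by
  have hψd : Differentiable ℝ ψ := hψ.differentiable one_ne_zero
  have hfc : Continuous (fderiv ℝ ψ) := hψ.continuous_fderiv one_ne_zero
  have pi_pos := Real.pi_pos
  -- radius outside which everything vanishes
  obtain ⟨R₀, hR₀⟩ := hcs.isBounded.subset_closedBall 0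
  set R : ℝ := max R₀ 0 + ‖w‖ + 1 with hRdef
  have hRpos : 0 < R := by positivity
  have hzero : ∀ z : ℂ, R < ‖z - w‖ → fderiv ℝ ψ z = 0 ∧ ψ z = 0 := by
    intro z hz
    have hznt : z ∉ tsupport ψ := by
      intro hzt
      have h1 : ‖z‖ ≤ R₀ := by simpa [Complex.dist_eq] using hR₀ hzt
      have h2 : ‖z - w‖ ≤ ‖z‖ + ‖w‖ := norm_sub_le _ _
      have h3 : R₀ ≤ max R₀ 0 := le_max_left _ _
      linarith
    exact ⟨Function.notMem_support.mp (fun hsup => hznt (support_fderiv_subset ℝ hsup)),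
      image_eq_zero_of_notMem_tsupport hznt⟩
  have hnorm_arg : ∀ p : ℝ × ℝ, 0 ≤ p.1 → ‖(w + p.1 • cc p.2) - w‖ = p.1 := by
    intro p hp
    rw [add_sub_cancel_left, norm_smul]
    simp [cc_norm, abs_of_nonneg hp]
  have hLzero : ∀ p : ℝ × ℝ, R < p.1 → LL ψ w p = 0 := by
    intro p hp
    exact (hzero _ (by rw [hnorm_arg p (le_of_lt (hRpos.trans hp))]; exact hp)).1
  -- continuity
  have hLcont : Continuous (LL ψ w) := by
    apply hfc.comp
    exact continuous_const.add (continuous_fst.smul (cc_cont.comp continuous_snd))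
  have hAcont : Continuous (AA ψ w) := hLcont.clm_apply (cc_cont.comp continuous_snd)
  have hBcont : Continuous (BB ψ w) :=
    continuous_const.mul (hLcont.clm_apply (continuous_const.mul (cc_cont.comp continuous_snd)))
  have htar : polarCoord.target = Set.Ioi (0:ℝ) ×ˢ Set.Ioo (-Real.pi) Real.pi := rfl
  -- integrability on the target
  have hAint : IntegrableOn (AA ψ w) polarCoord.target := by
    rw [htar]
    exact aux2 hAcont hRpos (fun p hp => by rw [AA, hLzero p hp]; simp)
  have hBint : IntegrableOn (BB ψ w) polarCoord.target := by
    rw [htar]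
    exact aux2 hBcont hRpos (fun p hp => by rw [BB, hLzero p hp]; simp)
  have hHint : IntegrableOn (HH ψ w) polarCoord.target := by
    unfold HH
    exact (hAint.add hBint).const_mul _
  -- the key pointwise identity on the target
  have keyEq : Set.EqOn (fun p : ℝ × ℝ => p.1 • FF ψ w (Complex.polarCoord.symm p))
      (HH ψ w) polarCoord.target := by
    intro p hp
    rw [htar] at hp
    have hr : (0:ℝ) < p.1 := hp.1
    simp only
    rw [hsymm_eq]
    set a := LL ψ w p 1 with ha
    set b := LL ψ w p Complex.I with hb
    set X := (Real.cos p.2 : ℂ) with hX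
    set Y := (Real.sin p.2 : ℂ) with hY
    have hXY : X ^ 2 + Y ^ 2 = 1 := by
      rw [hX, hY]
      norm_cast
      exact Real.cos_sq_add_sin_sq p.2
    have hcsplit : cc p.2 = (Real.cos p.2 : ℝ) • (1:ℂ) + (Real.sin p.2 : ℝ) • Complex.I := by
      rw [cc_val, Complex.real_smul, Complex.real_smul]
      simp [hX, hY]
    have hicsplit : Complex.I * cc p.2 = (-(Real.sin p.2) : ℝ) • (1:ℂ) + (Real.cos p.2 : ℝ) • Complex.I := by
      rw [cc_val, Complex.real_smul, Complex.real_smul]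
      push_cast
      ring_nf
      rw [Complex.I_sq]
      ring
    have hLc : LL ψ w p (cc p.2) = X * a + Y * b := by
      rw [hcsplit, map_add, (LL ψ w p).map_smul, (LL ψ w p).map_smul,
        Complex.real_smul, Complex.real_smul, ha, hb, hX, hY]
    have hLic : LL ψ w p (Complex.I * cc p.2) = -Y * a + X * b := by
      rw [hicsplit, map_add, (LL ψ w p).map_smul, (LL ψ w p).map_smul,
        Complex.real_smul, Complex.real_smul, ha, hb, hX, hY]
      push_cast
      ring
    have hdb : dbar ψ (w + p.1 • cc p.2) = (1/2) * (a + Complex.I * b) := rfl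
    have hinv : (X - Y * Complex.I) * (X + Y * Complex.I) = 1 := by
      linear_combination hXY - Y ^ 2 * Complex.I_sq
    have hne : X + Y * Complex.I ≠ 0 := by
      intro h
      rw [h, mul_zero] at hinv
      exact one_ne_zero hinv.symm
    have hrne : ((p.1 : ℂ)) ≠ 0 := by
      exact_mod_cast hr.ne'
    have hpine : ((Real.pi : ℂ)) ≠ 0 := by
      exact_mod_cast Real.pi_ne_zero
    rw [FF, HH, AA, BB, hdb, hLc, hLic, Complex.real_smul, Complex.real_smul, cc_val,
      ← hX, ← hY]
    have hne' : X + Complex.I * Y ≠ 0 := by rw [mul_comm]; exact hne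
    field_simp
    linear_combination (-(a + Complex.I*b)) * hXY +
      (a*Y^2 - b*X*Y) * Complex.I_sq
  -- radial integral
  have valA : ∀ θ : ℝ, ∫ r in Set.Ioi (0:ℝ), AA ψ w (r, θ) = - ψ w := by
    intro θ
    have hder : ∀ r : ℝ, HasDerivAt (fun r : ℝ => ψ (w + r • cc θ)) (AA ψ w (r, θ)) r := by
      intro r
      have h1 : HasDerivAt (fun r : ℝ => w + r • cc θ) (cc θ) r := by
        simpa using ((hasDerivAt_id r).smul_const (cc θ)).const_add w
      have h2 := (hψd (w + r • cc θ)).hasFDerivAt.comp_hasDerivAt r h1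
      simpa [AA, LL, Function.comp_def] using h2
    have hcont : Continuous (fun r : ℝ => ψ (w + r • cc θ)) :=
      hψ.continuous.comp (continuous_const.add (continuous_id.smul continuous_const))
    have hint : IntegrableOn (fun r => AA ψ w (r, θ)) (Set.Ioi (0:ℝ)) :=
      aux1 (hAcont.comp (continuous_id.prodMk continuous_const)) hRpos
        (fun r hr => by simp [AA, hLzero (r, θ) hr])
    have htend : Tendsto (fun r : ℝ => ψ (w + r • cc θ)) atTop (𝓝 0) := by
      refine Tendsto.congr' ?_ tendsto_const_nhds
      filter_upwards [eventually_gt_atTop R] with r hr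
      exact ((hzero _ (by rw [hnorm_arg (r, θ) (hRpos.le.trans hr.le)]; exact hr)).2).symm
    have hfin := integral_Ioi_of_hasDerivAt_of_tendsto hcont.continuousWithinAt
      (fun r _ => hder r) hint htend
    simpa using hfin
  -- angular integral
  have valB : ∀ r ∈ Set.Ioi (0:ℝ),
      ∫ θ in Set.Ioo (-Real.pi) Real.pi, BB ψ w (r, θ) = 0 := by
    intro r hr
    replace hr : (0:ℝ) < r := hr
    have hder : ∀ θ : ℝ, HasDerivAt (fun θ : ℝ => ψ (w + r • cc θ))
        (LL ψ w (r, θ) (r • (cc θ * Complex.I))) θ := by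
      intro θ
      have hc1 : HasDerivAt (fun θ : ℝ => (θ:ℂ) * Complex.I) Complex.I θ := by
        simpa using (Complex.ofRealCLM.hasDerivAt.mul_const Complex.I)
      have hc2 : HasDerivAt cc (cc θ * Complex.I) θ := by
        exact hc1.cexp
      have h3 : HasDerivAt (fun θ : ℝ => w + r • cc θ) (r • (cc θ * Complex.I)) θ :=
        (hc2.const_smul r).const_add w
      exact (hψd _).hasFDerivAt.comp_hasDerivAt θ h3
    have hDcont : Continuous (fun θ : ℝ => LL ψ w (r, θ) (r • (cc θ * Complex.I))) := by
      exact (hLcont.comp (continuous_const.prodMk continuous_id)).clm_apply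
        (continuous_const.smul (cc_cont.mul continuous_const) :
          Continuous ((fun _ : ℝ => r) • fun θ => cc θ * Complex.I))
    have hivd : ∫ θ in Set.Ioo (-Real.pi) Real.pi,
        LL ψ w (r, θ) (r • (cc θ * Complex.I)) = 0 := by
      rw [← integral_Ioc_eq_integral_Ioo,
        ← intervalIntegral.integral_of_le (by linarith : -Real.pi ≤ Real.pi),
        intervalIntegral.integral_eq_sub_of_hasDerivAt (fun θ _ => hder θ)
          (hDcont.intervalIntegrable _ _)]
      rw [cc_pi, cc_neg_pi, sub_self]
    have hBfD : ∀ θ : ℝ, BB ψ w (r, θ)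
        = r⁻¹ • (Complex.I * LL ψ w (r, θ) (r • (cc θ * Complex.I))) := by
      intro θ
      rw [(LL ψ w (r, θ)).map_smul, mul_comm (cc θ) Complex.I, mul_smul_comm,
        smul_smul, inv_mul_cancel₀ hr.ne', one_smul, BB]
    calc ∫ θ in Set.Ioo (-Real.pi) Real.pi, BB ψ w (r, θ)
        = ∫ θ in Set.Ioo (-Real.pi) Real.pi,
            r⁻¹ • (Complex.I * LL ψ w (r, θ) (r • (cc θ * Complex.I))) := by
          exact setIntegral_congr_fun measurableSet_Ioo (fun θ _ => hBfD θ)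
      _ = r⁻¹ • (Complex.I • ∫ θ in Set.Ioo (-Real.pi) Real.pi,
            LL ψ w (r, θ) (r • (cc θ * Complex.I))) := by
          simp_rw [← smul_eq_mul]
          rw [integral_smul, integral_smul]
      _ = 0 := by rw [hivd]; simp
  -- Fubini
  have hmeq : ((volume : Measure (ℝ × ℝ)).restrict
        (Set.Ioi (0:ℝ) ×ˢ Set.Ioo (-Real.pi) Real.pi))
      = (((volume : Measure ℝ).restrict (Set.Ioi 0)).prod
          ((volume : Measure ℝ).restrict (Set.Ioo (-Real.pi) Real.pi))) := by
    rw [Measure.prod_restrict]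
    rfl
  have hAval : ∫ p in polarCoord.target, AA ψ w p = (2 * Real.pi : ℝ) • (- ψ w) := by
    rw [htar, hmeq, integral_prod_symm _ (by rw [← hmeq]; exact htar ▸ hAint)]
    rw [setIntegral_congr_fun measurableSet_Ioo (fun θ _ => valA θ),
      setIntegral_const, measureReal_def, Real.volume_Ioo, sub_neg_eq_add,
      ENNReal.toReal_ofReal (by positivity)]
    norm_num [two_mul]
  have hBval : ∫ p in polarCoord.target, BB ψ w p = 0 := by
    rw [htar, hmeq, integral_prod _ (by rw [← hmeq]; exact htar ▸ hBint)]
    rw [setIntegral_congr_fun measurableSet_Ioi valB]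
    simp
  have hHfun : HH ψ w = fun p => (1 / (2 * (Real.pi:ℂ))) • (AA ψ w p + BB ψ w p) := by
    funext p
    rw [HH, smul_eq_mul]
  have hHval : ∫ p in polarCoord.target, HH ψ w p = - ψ w := by
    rw [hHfun, integral_smul, integral_add hAint hBint, hAval, hBval, add_zero,
      Complex.real_smul]
    have hpine : ((Real.pi : ℂ)) ≠ 0 := by exact_mod_cast Real.pi_ne_zero
    push_cast
    field_simp
    rw [smul_eq_mul]
    field_simp
  have hFeval : ∫ z, FF ψ w z = - ψ w := by
    rw [← Complex.integral_comp_polarCoord_symm (FF ψ w),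
      setIntegral_congr_fun polarCoord.open_target.measurableSet keyEq, hHval]
  have hFint : Integrable (FF ψ w) :=
    integrable_of_polar (hHint.congr_fun keyEq.symm polarCoord.open_target.measurableSet)
  have hcomp : (fun z : ℂ => dbar ψ z / ((Real.pi : ℂ) * (z - w)))
      = fun z => FF ψ w (z - w) := by
    funext z
    rw [FF, show w + (z - w) = z by ring]
  refine ⟨?_, ?_⟩
  · rw [hcomp]; exact hFint.comp_sub_right w
  · rw [hcomp, integral_sub_right_eq_self (FF ψ w) w, hFeval]


/-- The kernel `S(z) = exp(g(w) − g(z))/(π(z − w))` inverts the perturbed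
Cauchy–Riemann operator `∂̄ + ∂̄g` : for every `C¹` compactly supported `φ`,
`∫ S·(−∂̄φ + ∂̄g·φ) dA = φ(w)`, i.e. `(∂̄ + ∂̄g)S = δ_w` distributionally. -/
theorem stmt1 (g : ℂ → ℂ) (hg : ContDiff ℝ 1 g) (w : ℂ)
    (φ : ℂ → ℂ) (hφ : ContDiff ℝ 1 φ) (hφc : HasCompactSupport φ) :
    Integrable (fun z : ℂ =>
      (Complex.exp (g w - g z) / ((Real.pi : ℂ) * (z - w))) *
        (-(dbar φ z) + dbar g z * φ z)) volume ∧
    ∫ z : ℂ,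
      (Complex.exp (g w - g z) / ((Real.pi : ℂ) * (z - w))) *
        (-(dbar φ z) + dbar g z * φ z) = φ w := by
  have hgd : Differentiable ℝ g := hg.differentiable one_ne_zero
  have hφd : Differentiable ℝ φ := hφ.differentiable one_ne_zero
  set ψ : ℂ → ℂ := fun z => Complex.exp (g w - g z) * φ z with hψdef
  have hψ : ContDiff ℝ 1 ψ := ((contDiff_const.sub hg).cexp).mul hφ
  have hψc : HasCompactSupport ψ := hφc.mul_left
  have hdb : ∀ z : ℂ, dbar ψ z
      = Complex.exp (g w - g z) * (dbar φ z - dbar g z * φ z) := by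
    intro z
    have h1 : dbar (fun z => Complex.exp (g w - g z)) z
        = Complex.exp (g w - g z) * (- dbar g z) := by
      rw [dbar_cexp (fun z => g w - g z) z ((differentiableAt_const _).sub (hgd z)),
        dbar_const_sub _ _ _ (hgd z)]
    have h2 := dbar_mul (fun z => Complex.exp (g w - g z)) φ z
      (((differentiableAt_const _).sub (hgd z)).cexp) (hφd z)
    rw [hψdef]
    rw [h2, h1]
    ring
  have key := pompeiu ψ hψ hψc w
  have heq : ∀ z : ℂ,
      (Complex.exp (g w - g z) / ((Real.pi : ℂ) * (z - w))) *
        (-(dbar φ z) + dbar g z * φ z)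
      = - (dbar ψ z / ((Real.pi : ℂ) * (z - w))) := by
    intro z
    rw [hdb z, div_mul_eq_mul_div, ← neg_div]
    congr 1
    ring
  constructor
  · exact (key.1.neg).congr (Filter.Eventually.of_forall fun z => (heq z).symm)
  · calc ∫ z : ℂ, (Complex.exp (g w - g z) / ((Real.pi : ℂ) * (z - w))) *
          (-(dbar φ z) + dbar g z * φ z)
        = ∫ z : ℂ, - (dbar ψ z / ((Real.pi : ℂ) * (z - w))) := by simp_rw [heq]
      _ = - ∫ z : ℂ, dbar ψ z / ((Real.pi : ℂ) * (z - w)) := integral_neg _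
      _ = ψ w := by rw [key.2, neg_neg]
      _ = φ w := by rw [hψdef]; simp
end

section
/- Let g : ℂ → ℂ be continuously differentiable (over ℝ) with compact support. Suppose u : ℂ → ℂ is continuous, u(z) → 0 as |z| → ∞, and u is a distributional solution of (∂̄ + ∂̄g)u = 0, i.e. for every continuously differentiable compactly supported φ : ℂ → ℂ one has ∫_ℂ u(z)·(−∂̄φ(z) + ∂̄g(z)·φ(z)) dA(z) = 0. Then u ≡ 0. (Hence the kernel S(z) = exp(g(w)−g(z))/(π(z−w)) is the unique inverting kernel for ∂̄ + ∂̄g that vanishes at infinity.) -/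
open Filter Topology MeasureTheory
open scoped Convolution

lemma dbar_hasFDerivAt {f : ℂ → ℂ} {L : ℂ →L[ℝ] ℂ} {z : ℂ} (h : HasFDerivAt f L z) :
    dbar f z = (1 / 2) * (L 1 + Complex.I * L Complex.I) := by
  rw [dbar, h.fderiv]

lemma differentiableAt_of_dbar_eq_zero {f : ℂ → ℂ} {L : ℂ →L[ℝ] ℂ} {z : ℂ}
    (h : HasFDerivAt f L z) (h0 : dbar f z = 0) : DifferentiableAt ℂ f z := by
  rw [dbar_hasFDerivAt h] at h0
  have hI : L Complex.I = Complex.I * L 1 := by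
    linear_combination (-2*Complex.I) * h0 + L Complex.I * Complex.I_sq
  set L' : ℂ →L[ℂ] ℂ := (L 1) • ContinuousLinearMap.id ℂ ℂ with hL'
  have hres : L'.restrictScalars ℝ = L := by
    apply ContinuousLinearMap.ext
    intro c
    have hc : c = (c.re : ℝ) • (1 : ℂ) + (c.im : ℝ) • Complex.I := by
      simp [Complex.real_smul, Complex.re_add_im]
    rw [ContinuousLinearMap.coe_restrictScalars']
    calc L' c = L 1 * c := by simp [hL', smul_eq_mul]
    _ = L ((c.re : ℝ) • (1 : ℂ) + (c.im : ℝ) • Complex.I) := by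
        rw [map_add, L.map_smul, L.map_smul, hI]
        simp [Complex.real_smul]
        linear_combination (-(L 1)) * Complex.re_add_im c
    _ = L c := by rw [← hc]
  exact (hasFDerivAt_of_restrictScalars ℝ h hres).differentiableAt

/-- Uniqueness: a continuous distributional solution of `(∂̄ + ∂̄g)u = 0`
(`g` being `C¹` with compact support) that vanishes at infinity is identically `0`. -/
theorem stmt2 (g : ℂ → ℂ) (hg : ContDiff ℝ 1 g) (hgc : HasCompactSupport g)
    (u : ℂ → ℂ) (hu : Continuous u)
    (hu0 : Tendsto u (cocompact ℂ) (𝓝 0))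
    (h : ∀ φ : ℂ → ℂ, ContDiff ℝ 1 φ → HasCompactSupport φ →
      ∫ z : ℂ, u z * (-(dbar φ z) + dbar g z * φ z) = 0) :
    ∀ z : ℂ, u z = 0 := by
  set w : ℂ → ℂ := fun z => u z * Complex.exp (g z) with hw_def
  have hwc : Continuous w := hu.mul (Complex.continuous_exp.comp hg.continuous)
  have hwli : LocallyIntegrable w volume := hwc.locallyIntegrable
  -- `w` tends to `0` at infinity
  have hw0 : Tendsto w (cocompact ℂ) (𝓝 0) := by
    apply hu0.zero_mul_isBoundedUnder_le
    refine isBoundedUnder_of_eventually_le (a := 1) ?_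
    filter_upwards [hgc.compl_mem_cocompact] with z hz
    have : g z = 0 := image_eq_zero_of_notMem_tsupport hz
    simp [Function.comp, this]
  -- derived distributional equation: `w = u * exp ∘ g` is distributionally holomorphic
  have hw : ∀ φ : ℂ → ℂ, ContDiff ℝ 1 φ → HasCompactSupport φ →
      ∫ z : ℂ, w z * dbar φ z = 0 := by
    intro φ hφ hφc
    set ψ : ℂ → ℂ := fun z => Complex.exp (g z) * φ z with hψ_def
    have hψ : ContDiff ℝ 1 ψ :=
      ((Complex.contDiff_exp (𝕜 := ℂ)).restrict_scalars ℝ |>.comp hg).mul hφ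
    have hψc : HasCompactSupport ψ := hφc.mul_left
    have h0 := h ψ hψ hψc
    have key : ∀ z, u z * (-(dbar ψ z) + dbar g z * ψ z) = -(w z * dbar φ z) := by
      intro z
      have hg' : HasFDerivAt g (fderiv ℝ g z) z := (hg.differentiable one_ne_zero z).hasFDerivAt
      have hφ' : HasFDerivAt φ (fderiv ℝ φ z) z := (hφ.differentiable one_ne_zero z).hasFDerivAt
      have hE : HasFDerivAt (fun y => Complex.exp (g y))
          ((((1 : ℂ →L[ℂ] ℂ).smulRight (Complex.exp (g z))).restrictScalars ℝ).comp
            (fderiv ℝ g z)) z :=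
        ((Complex.hasDerivAt_exp (g z)).hasFDerivAt.restrictScalars ℝ).comp z hg'
      have hψ' := hE.mul hφ'
      have hfd : fderiv ℝ (fun z => Complex.exp (g z) * φ z) z = _ := hψ'.fderiv
      simp only [dbar, hψ_def, hfd]
      simp only [ContinuousLinearMap.add_apply, ContinuousLinearMap.coe_smul',
        Pi.smul_apply, ContinuousLinearMap.coe_comp', Function.comp_apply,
        ContinuousLinearMap.coe_restrictScalars', ContinuousLinearMap.smulRight_apply,
        ContinuousLinearMap.one_apply, smul_eq_mul, hw_def]
      ring
    rw [show (fun z => u z * (-(dbar ψ z) + dbar g z * ψ z))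
        = fun z => -(w z * dbar φ z) from funext key] at h0
    rwa [integral_neg, neg_eq_zero] at h0
  -- mollification
  set L : ℂ →L[ℝ] ℝ →L[ℝ] ℂ := (ContinuousLinearMap.lsmul ℝ ℝ : ℝ →L[ℝ] ℂ →L[ℝ] ℂ).flip with hL
  set φb : ℕ → ContDiffBump (0 : ℂ) := fun n =>
    ⟨((n : ℝ) + 1)⁻¹ / 2, ((n : ℝ) + 1)⁻¹, by positivity, by
      have : (0:ℝ) < ((n : ℝ) + 1)⁻¹ := by positivity
      linarith⟩ with hφb
  set F : ℕ → ℂ → ℂ := fun n => w ⋆[L, volume] (φb n).normed volume with hF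
  have hFd : ∀ n x, HasFDerivAt (F n)
      ((w ⋆[L.precompR ℂ, volume] fderiv ℝ ((φb n).normed volume)) x) x := fun n x =>
    ((φb n).hasCompactSupport_normed).hasFDerivAt_convolution_right L hwli
      ((φb n).contDiff_normed) x
  have happ : ∀ n x (v : ℂ),
      (w ⋆[L.precompR ℂ, volume] fderiv ℝ ((φb n).normed volume)) x v
        = ∫ t, (fderiv ℝ ((φb n).normed volume) (x - t) v) • w t := by
    intro n x v
    have hpre := convolution_precompR_apply (𝕜 := ℝ) L hwli
      (((φb n).hasCompactSupport_normed (μ := volume)).fderiv ℝ)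
      (((φb n).contDiff_normed (μ := volume) (n := 1)).continuous_fderiv (by simp)) x v
    rw [hpre, convolution_def]
    simp [hL]
  -- each mollification is entire
  have hFdiff : ∀ n, Differentiable ℂ (F n) := by
    intro n x
    apply differentiableAt_of_dbar_eq_zero (hFd n x)
    set ρ : ℂ → ℝ := (φb n).normed volume with hρ
    have hρ1 : ContDiff ℝ 1 ρ := (φb n).contDiff_normed
    have hρc : HasCompactSupport ρ := (φb n).hasCompactSupport_normed
    have hρf : Continuous (fderiv ℝ ρ) := hρ1.continuous_fderiv one_ne_zero
    have hsupp : ∀ v : ℂ, HasCompactSupport (fun t => (fderiv ℝ ρ (x - t) v : ℝ)) := by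
      intro v
      apply HasCompactSupport.intro (K := (fun t : ℂ => x - t) '' tsupport (fderiv ℝ ρ))
      · exact ((hρc.fderiv ℝ).image (continuous_const.sub continuous_id))
      · intro t ht
        have hxt : x - t ∉ tsupport (fderiv ℝ ρ) := by
          intro hmem
          exact ht ⟨x - t, hmem, sub_sub_cancel x t⟩
        rw [image_eq_zero_of_notMem_tsupport hxt]
        rfl
    have hint : ∀ v : ℂ, Integrable (fun t => (fderiv ℝ ρ (x - t) v) • w t) volume := by
      intro v
      apply Continuous.integrable_of_hasCompactSupport
      · exact ((hρf.comp (continuous_const.sub continuous_id)).clm_apply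
          continuous_const).smul hwc
      · exact (hsupp v).smul_right
    -- the mollified test function
    set ψ : ℂ → ℂ := fun s => ((ρ (x - s) : ℝ) : ℂ) with hψ_def
    have hψ1 : ContDiff ℝ 1 ψ :=
      Complex.ofRealCLM.contDiff.comp (hρ1.comp (contDiff_const.sub contDiff_id))
    have hψc : HasCompactSupport ψ := by
      apply HasCompactSupport.intro (K := (fun t : ℂ => x - t) '' tsupport ρ)
      · exact hρc.image (continuous_const.sub continuous_id)
      · intro t ht
        have hxt : x - t ∉ tsupport ρ := by
          intro hmem
          exact ht ⟨x - t, hmem, sub_sub_cancel x t⟩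
        simp [hψ_def, image_eq_zero_of_notMem_tsupport hxt]
    have h0 := hw ψ hψ1 hψc
    have hψd : ∀ s : ℂ, HasFDerivAt ψ (Complex.ofRealCLM.comp ((fderiv ℝ ρ (x - s)).comp
        ((0 : ℂ →L[ℝ] ℂ) - ContinuousLinearMap.id ℝ ℂ))) s := fun s =>
      (Complex.ofRealCLM.hasFDerivAt).comp s
        (((hρ1.differentiable one_ne_zero (x - s)).hasFDerivAt).comp s
          ((hasFDerivAt_const x s).sub (hasFDerivAt_id s)))
    have hintm : ∀ v : ℂ, Integrable
        (fun t => ((fderiv ℝ ρ (x - t) v : ℝ) : ℂ) * w t) volume := fun v => by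
      simpa [Complex.real_smul] using hint v
    have hdbarψ : ∀ s : ℂ, dbar ψ s
        = -((1/2 : ℂ) * (((fderiv ℝ ρ (x - s) 1 : ℝ) : ℂ)
            + Complex.I * ((fderiv ℝ ρ (x - s) Complex.I : ℝ) : ℂ))) := by
      intro s
      rw [dbar_hasFDerivAt (hψd s)]
      simp only [ContinuousLinearMap.coe_comp', Function.comp_apply,
        ContinuousLinearMap.sub_apply, ContinuousLinearMap.zero_apply,
        ContinuousLinearMap.coe_id', id_eq, zero_sub, ContinuousLinearMap.neg_apply,
        map_neg, Complex.ofRealCLM_apply, Complex.ofReal_neg]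
      ring
    rw [dbar_hasFDerivAt (hFd n x), happ n x 1, happ n x Complex.I]
    simp only [← hρ, Complex.real_smul]
    rw [← integral_const_mul Complex.I,
      ← integral_add (hintm 1) ((hintm Complex.I).const_mul Complex.I),
      ← integral_const_mul ((1:ℂ)/2)]
    rw [show (fun t => (1/2 : ℂ) * (((fderiv ℝ ρ (x - t) 1 : ℝ) : ℂ) * w t
          + Complex.I * (((fderiv ℝ ρ (x - t) Complex.I : ℝ) : ℂ) * w t)))
        = fun t => -(w t * dbar ψ t) from funext fun s => by rw [hdbarψ s]; ring]
    rw [integral_neg, h0, neg_zero]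
  -- locally uniform convergence of the mollifications to `w`
  have hflip : ∀ n, F n
      = (φb n).normed volume ⋆[ContinuousLinearMap.lsmul ℝ ℝ, volume] w := by
    intro n
    exact (convolution_flip (L := ContinuousLinearMap.lsmul ℝ ℝ)
      (f := (φb n).normed volume) (g := w)).symm.symm
  have hconv : TendstoLocallyUniformly (fun n => F n) w atTop := by
    rw [tendstoLocallyUniformly_iff_forall_tendsto]
    intro x
    have hrOut : Tendsto (fun p : ℕ × ℂ => (φb p.1).rOut) (atTop ×ˢ 𝓝 x) (𝓝 0) := by
      have h1 : Tendsto (fun n : ℕ => ((n : ℝ) + 1)⁻¹) atTop (𝓝 0) := by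
        simpa [one_div] using tendsto_one_div_add_atTop_nhds_zero_nat (𝕜 := ℝ)
      exact h1.comp tendsto_fst
    have := ContDiffBump.convolution_tendsto_right (μ := volume)
      (φ := fun p : ℕ × ℂ => φb p.1) (g := fun _ : ℕ × ℂ => w) (k := Prod.snd)
      (x₀ := x) (z₀ := w x) (l := atTop ×ˢ 𝓝 x) hrOut
      (Eventually.of_forall fun _ => hwc.aestronglyMeasurable)
      ((hwc.tendsto x).comp tendsto_snd) tendsto_snd
    have hFto : Tendsto (fun y : ℕ × ℂ => F y.1 y.2) (atTop ×ˢ 𝓝 x) (𝓝 (w x)) :=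
      Tendsto.congr (fun y => (congrFun (hflip y.1) y.2).symm) this
    have hpair : Tendsto (fun y : ℕ × ℂ => (w y.2, F y.1 y.2)) (atTop ×ˢ 𝓝 x)
        (𝓝 (w x, w x)) := ((hwc.tendsto x).comp tendsto_snd).prodMk_nhds hFto
    exact hpair.mono_right (nhds_le_uniformity _)
  -- `w` is entire
  have hwdiff : Differentiable ℂ w := by
    rw [← differentiableOn_univ]
    exact (hconv.tendstoLocallyUniformlyOn).differentiableOn
      (Eventually.of_forall fun n => (hFdiff n).differentiableOn) isOpen_univ
  -- `w` is bounded, hence constant, hence zero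
  have hb : Bornology.IsBounded (Set.range w) := by
    have hmem : w ⁻¹' Metric.closedBall 0 1 ∈ cocompact ℂ :=
      hw0 (Metric.closedBall_mem_nhds (0 : ℂ) one_pos)
    obtain ⟨K, hK, hKs⟩ := mem_cocompact.mp hmem
    have hsub : Set.range w ⊆ w '' K ∪ Metric.closedBall 0 1 := by
      rintro - ⟨z, rfl⟩
      by_cases hz : z ∈ K
      · exact Set.mem_union_left _ ⟨z, hz, rfl⟩
      · exact Set.mem_union_right _ (hKs hz)
    exact ((hK.image hwc).isBounded.union Metric.isBounded_closedBall).subset hsub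
  have hcst : ∀ z, w z = w 0 := fun z => hwdiff.apply_eq_apply_of_bounded hb z 0
  have hzero : w 0 = 0 := by
    have h1 : Tendsto w (cocompact ℂ) (𝓝 (w 0)) :=
      Tendsto.congr (fun z => (hcst z).symm) tendsto_const_nhds
    exact tendsto_nhds_unique h1 hw0
  intro z
  have hz : u z * Complex.exp (g z) = 0 := by
    have := hcst z
    rwa [hzero] at this
  exact (mul_eq_zero.mp hz).resolve_right (Complex.exp_ne_zero _)
end

section
/- Let g : ℂ → ℂ be defined near w ∈ ℂ and differentiable over ℝ at w, and set a = ∂̄g(w). Then the near-diagonal expansion of the kernel S(z) = exp(g(w) − g(z))/(π(z − w)) holds: lim_{z → w, z ≠ w} [ exp(g(w) − g(z)) · exp(2 i · Im(a · conj(z − w))) / (π (z − w)) − 1/(π (z − w)) ] = −(2/π) · ∂(Re g)(w), where ∂(Re g)(w) = ½(∂ₓ(Re g)(w) − i ∂ᵧ(Re g)(w)). (This identifies the subleading coefficient r_α(w) = −(2/π)(∂_z Re g)(w) in the expansion S_α(z,w)·e^{2i Im(a·conj(z−w))} = 1/(π(z−w)) + r_α(w) + o(1), which drives the Quillen-type variational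 formula for determinants of the family of Cauchy–Riemann operators ∂̄ + t ∂̄g.) -/
open Filter Topology

/-- Near-diagonal expansion of the kernel `S(z) = exp(g(w)−g(z))/(π(z−w))`:
with `a = ∂̄g(w)`,
`lim_{z→w} [ S(z)·e^{2i·Im(a·conj(z−w))} − 1/(π(z−w)) ] = −(2/π)·∂(Re g)(w)`,
where `∂(Re g)(w) = ½(∂ₓ(Re g)(w) − i·∂ᵧ(Re g)(w))`. -/
theorem stmt3 (g : ℂ → ℂ) (w : ℂ) (hg : DifferentiableAt ℝ g w)
    (a : ℂ) (ha : a = dbar g w) :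
    Tendsto
      (fun z : ℂ =>
        Complex.exp (g w - g z) *
            Complex.exp (2 * Complex.I * (((a * (starRingEnd ℂ) (z - w)).im : ℝ) : ℂ)) /
              ((Real.pi : ℂ) * (z - w)) -
          1 / ((Real.pi : ℂ) * (z - w)))
      (𝓝[≠] w)
      (𝓝 (-(2 / (Real.pi : ℂ)) *
        ((1 / 2 : ℂ) *
          (((fderiv ℝ (fun z : ℂ => (g z).re) w 1 : ℝ) : ℂ) -
            Complex.I * ((fderiv ℝ (fun z : ℂ => (g z).re) w Complex.I : ℝ) : ℂ))))) := by
  set L := fderiv ℝ g w with hLdef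
  set u := L 1 with hu
  set v := L Complex.I with hv
  have hπ : (Real.pi : ℂ) ≠ 0 := by exact_mod_cast Real.pi_ne_zero
  have ha' : a = (u + Complex.I * v) / 2 := by
    rw [ha, dbar]; ring
  set b : ℂ := (u - Complex.I * v) / 2 with hb
  -- decomposition of the real-linear map L
  have hLz : ∀ z : ℂ, L z = b * z + a * (starRingEnd ℂ) z := by
    intro z
    set x : ℂ := (z.re : ℂ) with hx
    set y : ℂ := (z.im : ℂ) with hy
    have hz : z = x + y * Complex.I := (Complex.re_add_im z).symm
    have h1 : L z = x * u + y * v := by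
      conv_lhs => rw [hz]
      have h2 : (x + y * Complex.I) = (z.re : ℝ) • (1 : ℂ) + (z.im : ℝ) • Complex.I := by
        simp [Complex.real_smul, hx, hy]
      rw [h2, map_add, map_smul, map_smul]
      simp [Complex.real_smul, hu, hv, hx, hy]
    have hc : (starRingEnd ℂ) z = x - y * Complex.I := by
      rw [hz, map_add, map_mul, Complex.conj_I, hx, hy, Complex.conj_ofReal,
        Complex.conj_ofReal]
      ring
    rw [h1, hc, hb, ha']
    conv_rhs => rw [hz]
    ring_nf
    rw [Complex.I_sq]
    ring
  -- the auxiliary function h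
  set h : ℂ → ℂ := fun z =>
    g w - g z + (a * (starRingEnd ℂ) (z - w) - (starRingEnd ℂ) a * (z - w)) with hh
  have hexp2 : ∀ z : ℂ, 2 * Complex.I * (((a * (starRingEnd ℂ) (z - w)).im : ℝ) : ℂ)
      = a * (starRingEnd ℂ) (z - w) - (starRingEnd ℂ) a * (z - w) := by
    intro z
    have h0 : (((2 * (a * (starRingEnd ℂ) (z - w)).im : ℝ)) : ℂ) * Complex.I
        = a * (starRingEnd ℂ) (z - w) - (starRingEnd ℂ) a * (z - w) := by
      rw [← Complex.sub_conj, map_mul, Complex.conj_conj]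
    rw [← h0]; push_cast; ring
  -- h tends to 0
  have t3 : Tendsto h (𝓝[≠] w) (𝓝 0) := by
    have hcont : ContinuousAt h w := by
      apply ContinuousAt.add
      · exact continuousAt_const.sub hg.continuousAt
      · exact ((continuous_const.mul
          (Complex.continuous_conj.comp (continuous_id.sub continuous_const))).sub
          (continuous_const.mul (continuous_id.sub continuous_const))).continuousAt
    have hw0 : h w = 0 := by simp [hh]
    simpa [hw0] using hcont.tendsto.mono_left nhdsWithin_le_nhds
  -- h z / (z - w) tends to -(b + conj a)
  have t1 : Tendsto (fun z => (g z - g w - L (z - w)) / (z - w)) (𝓝[≠] w) (𝓝 0) := by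
    have := (hg.hasFDerivAt.isLittleO).tendsto_div_nhds_zero
    exact this.mono_left nhdsWithin_le_nhds
  have t2 : Tendsto (fun z => h z / (z - w)) (𝓝[≠] w)
      (𝓝 (-(b + (starRingEnd ℂ) a))) := by
    have key : ∀ z : ℂ, z ≠ w →
        h z / (z - w) = -((g z - g w - L (z - w)) / (z - w)) - (b + (starRingEnd ℂ) a) := by
      intro z hz
      have hzw : z - w ≠ 0 := sub_ne_zero.mpr hz
      have hL : L (z - w) = b * (z - w) + a * (starRingEnd ℂ) (z - w) := hLz (z - w)
      field_simp [hh, hL]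
      simp only [hh, hL]
      ring
    have : Tendsto (fun z => -((g z - g w - L (z - w)) / (z - w)) - (b + (starRingEnd ℂ) a))
        (𝓝[≠] w) (𝓝 (-(0 : ℂ) - (b + (starRingEnd ℂ) a))) := (t1.neg).sub_const _
    rw [show -(0 : ℂ) - (b + (starRingEnd ℂ) a) = -(b + (starRingEnd ℂ) a) by ring] at this
    refine this.congr' ?_
    filter_upwards [self_mem_nhdsWithin] with z hz
    exact (key z hz).symm
  -- the function φ(u) = (exp u - 1)/u, extended by 1 at 0
  set φ : ℂ → ℂ := fun t => if t = 0 then 1 else (Complex.exp t - 1) / t with hφ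
  have t4 : Tendsto φ (𝓝 0) (𝓝 1) := by
    rw [← nhdsNE_sup_pure (0 : ℂ)]
    refine Tendsto.sup ?_ ?_
    · have hd : HasDerivAt Complex.exp (Complex.exp 0) 0 := Complex.hasDerivAt_exp 0
      rw [hasDerivAt_iff_tendsto_slope] at hd
      simp only [Complex.exp_zero] at hd
      refine hd.congr' ?_
      filter_upwards [self_mem_nhdsWithin] with t ht
      simp only [Set.mem_compl_iff, Set.mem_singleton_iff] at ht
      simp [hφ, ht, slope_def_field, div_eq_iff ht]
    · have hφ0 : φ 0 = 1 := by simp [hφ]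
      simpa [hφ0] using tendsto_pure_nhds φ 0
  have hfac : ∀ t : ℂ, Complex.exp t - 1 = φ t * t := by
    intro t
    by_cases ht : t = 0
    · simp [ht]
    · simp [hφ, ht, div_mul_cancel₀ _ ht]
  -- main limit
  have main : Tendsto (fun z => φ (h z) * (h z / (z - w) / (Real.pi : ℂ)))
      (𝓝[≠] w) (𝓝 (1 * (-(b + (starRingEnd ℂ) a) / (Real.pi : ℂ)))) :=
    (t4.comp t3).mul (t2.div_const _)
  -- identify the function
  have heq : ∀ᶠ z in 𝓝[≠] w,
      φ (h z) * (h z / (z - w) / (Real.pi : ℂ)) =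
      Complex.exp (g w - g z) *
          Complex.exp (2 * Complex.I * (((a * (starRingEnd ℂ) (z - w)).im : ℝ) : ℂ)) /
            ((Real.pi : ℂ) * (z - w)) -
        1 / ((Real.pi : ℂ) * (z - w)) := by
    filter_upwards [self_mem_nhdsWithin] with z hz
    have hzw : z - w ≠ 0 := sub_ne_zero.mpr hz
    rw [← Complex.exp_add, hexp2 z, div_sub_div_same]
    have hid : g w - g z + (a * (starRingEnd ℂ) (z - w) - (starRingEnd ℂ) a * (z - w))
        = h z := rfl
    rw [hid, hfac (h z), div_div, mul_comm (z - w) ((Real.pi : ℂ)), mul_div_assoc]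
  -- identify the limit value
  have hRe : fderiv ℝ (fun z : ℂ => (g z).re) w = Complex.reCLM.comp L := by
    have : HasFDerivAt (fun z : ℂ => (g z).re) (Complex.reCLM.comp L) w :=
      (Complex.reCLM.hasFDerivAt).comp w hg.hasFDerivAt
    exact this.fderiv
  have hval : (-(2 / (Real.pi : ℂ)) *
        ((1 / 2 : ℂ) *
          (((fderiv ℝ (fun z : ℂ => (g z).re) w 1 : ℝ) : ℂ) -
            Complex.I * ((fderiv ℝ (fun z : ℂ => (g z).re) w Complex.I : ℝ) : ℂ))))
      = 1 * (-(b + (starRingEnd ℂ) a) / (Real.pi : ℂ)) := by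
    rw [hRe]
    simp only [ContinuousLinearMap.coe_comp', Function.comp_apply, Complex.reCLM_apply]
    rw [← hu, ← hv, hb, ha']
    have h1 : ((u.re : ℝ) : ℂ) = (u + (starRingEnd ℂ) u) / 2 := by
      rw [Complex.add_conj]; push_cast; ring
    have h2 : ((v.re : ℝ) : ℂ) = (v + (starRingEnd ℂ) v) / 2 := by
      rw [Complex.add_conj]; push_cast; ring
    rw [h1, h2, map_div₀, map_add, map_mul, Complex.conj_I, map_ofNat]
    ring
  rw [hval]
  exact main.congr' heq
end

section
/- Set z₀ = ε' + ε τ. Then the instanton partition function of the compactified free field evaluates as: Σ_{(a,b) ∈ ℤ×ℤ} exp( −(2π/Im τ)·|b/2 − conj(τ)·a/2|² − 4π i ((b/2)·ε + (a/2)·ε') − π i·a·b ) = √(2 Im τ) · exp(−2π (Im z₀)²/Im τ) · |θ₃(z₀)|². (Equivalently, with half-integers n = a/2, m = b/2, Z_inst = Σ_{n,m ∈ ½ℤ} e^{−S(φ_{nm})} where S(φ_{nm}) = (2π/Im τ)|m − conj(τ) n|² + 4π i (m ε + n ε') + 4π i n m; the sum converges absolutely.) -/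
open Filter Topology Complex Real
open scoped ComplexConjugate

noncomputable section

namespace Stmt9

lemma quad_lb {t σ : ℝ} (ht : 0 < t) (x y : ℝ) :
    t ^ 2 / (2 * (1 + σ ^ 2 + t ^ 2)) * (x ^ 2 + y ^ 2) ≤ (y - σ * x) ^ 2 + t ^ 2 * x ^ 2 := by
  set K : ℝ := 1 + σ ^ 2 + t ^ 2 with hK
  have hKpos : 0 < K := by positivity
  have hα : 0 < 2 * K - t ^ 2 := by nlinarith [sq_nonneg σ, sq_nonneg t]
  rw [div_mul_eq_mul_div, div_le_iff₀ (by positivity), ← sub_nonneg]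
  have key : ((y - σ * x) ^ 2 + t ^ 2 * x ^ 2) * (2 * K) - t ^ 2 * (x ^ 2 + y ^ 2) =
      (((2 * K - t ^ 2) * y - 2 * K * σ * x) ^ 2 + (2 * K ^ 2 * t ^ 2 + t ^ 4) * x ^ 2) /
        (2 * K - t ^ 2) := by
    rw [eq_div_iff (ne_of_gt hα), hK]
    ring
  rw [key]
  positivity

lemma summable_gauss {c : ℝ} (hc : 0 < c) : Summable fun n : ℤ => Real.exp (-c * (n : ℝ) ^ 2) := by
  have h := summable_pow_mul_jacobiTheta₂_term_bound 0 (T := c / π) (by positivity) 0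
  refine h.congr fun n => ?_
  have hπ : (π : ℝ) ≠ 0 := Real.pi_ne_zero
  rw [pow_zero, one_mul]
  congr 1
  field_simp
  ring

lemma norm_term (τ : ℂ) (ε ε' : ℝ) (a b : ℤ) :
    ‖Complex.exp (((-(2 * π / τ.im) *
          (‖(b : ℂ) / 2 - conj τ * ((a : ℂ) / 2)‖) ^ 2 : ℝ) : ℂ)
        - 4 * (π : ℂ) * I * (((b : ℂ) / 2) * (ε : ℂ) + ((a : ℂ) / 2) * (ε' : ℂ))
        - (π : ℂ) * I * (a : ℂ) * (b : ℂ))‖ =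
    Real.exp (-(2 * π / τ.im) * (‖(b : ℂ) / 2 - conj τ * ((a : ℂ) / 2)‖) ^ 2) := by
  set r : ℝ := -(2 * π / τ.im) * (‖(b : ℂ) / 2 - conj τ * ((a : ℂ) / 2)‖) ^ 2 with hr
  have h : (r : ℂ) - 4 * (π : ℂ) * I * (((b : ℂ) / 2) * (ε : ℂ) + ((a : ℂ) / 2) * (ε' : ℂ))
        - (π : ℂ) * I * (a : ℂ) * (b : ℂ)
      = (r : ℂ) + ((-4 * π * ((b : ℝ) / 2 * ε + (a : ℝ) / 2 * ε') - π * a * b : ℝ) : ℂ) * I := by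
    push_cast; ring
  rw [h, Complex.norm_exp]
  simp

lemma abs_val (τ : ℂ) (a b : ℤ) :
    (‖(b : ℂ) / 2 - conj τ * ((a : ℂ) / 2)‖) ^ 2
      = ((b : ℝ) / 2 - τ.re * a / 2) ^ 2 + (τ.im * a / 2) ^ 2 := by
  have h : (b : ℂ) / 2 - conj τ * ((a : ℂ) / 2)
      = ((((b : ℝ) / 2 : ℝ)) : ℂ) - conj τ * ((((a : ℝ) / 2 : ℝ)) : ℂ) := by push_cast; ring
  rw [h, Complex.sq_norm, Complex.normSq_apply]
  simp [Complex.sub_re, Complex.sub_im, Complex.mul_re, Complex.mul_im]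
  ring

lemma summ (τ : ℂ) (hτ : 0 < τ.im) (ε ε' : ℝ) :
    Summable (fun p : ℤ × ℤ => ‖Complex.exp (
      ((-(2 * Real.pi / τ.im) *
          (‖(p.2 : ℂ) / 2 - (starRingEnd ℂ) τ * ((p.1 : ℂ) / 2)‖) ^ 2 : ℝ) : ℂ)
        - 4 * (Real.pi : ℂ) * Complex.I *
            (((p.2 : ℂ) / 2) * (ε : ℂ) + ((p.1 : ℂ) / 2) * (ε' : ℂ))
        - (Real.pi : ℂ) * Complex.I * (p.1 : ℂ) * (p.2 : ℂ))‖) := by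
  set c : ℝ := π * τ.im / (4 * (1 + τ.re ^ 2 + τ.im ^ 2)) with hc'
  have hc : 0 < c := by have := Real.pi_pos; positivity
  have hs : Summable (fun p : ℤ × ℤ =>
      Real.exp (-c * (p.1 : ℝ) ^ 2) * Real.exp (-c * (p.2 : ℝ) ^ 2)) :=
    (summable_gauss hc).mul_of_nonneg (summable_gauss hc)
      (fun _ => (Real.exp_pos _).le) (fun _ => (Real.exp_pos _).le)
  refine Summable.of_nonneg_of_le (fun _ => norm_nonneg _) ?_ hs
  rintro ⟨a, b⟩
  rw [norm_term, abs_val, ← Real.exp_add]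
  apply Real.exp_le_exp.mpr
  have h3 := quad_lb (σ := τ.re) hτ (a : ℝ) (b : ℝ)
  have h2 : c * ((a : ℝ) ^ 2 + (b : ℝ) ^ 2)
      ≤ π / (2 * τ.im) * (((b : ℝ) - τ.re * a) ^ 2 + τ.im ^ 2 * (a : ℝ) ^ 2) := by
    calc c * ((a : ℝ) ^ 2 + (b : ℝ) ^ 2)
        = π / (2 * τ.im) * (τ.im ^ 2 / (2 * (1 + τ.re ^ 2 + τ.im ^ 2))
            * ((a : ℝ) ^ 2 + (b : ℝ) ^ 2)) := by
          rw [hc']; field_simp; ring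
      _ ≤ _ := mul_le_mul_of_nonneg_left h3 (by positivity)
  have h4 : -(2 * π / τ.im) * (((b : ℝ) / 2 - τ.re * a / 2) ^ 2 + (τ.im * a / 2) ^ 2)
      = -(π / (2 * τ.im) * (((b : ℝ) - τ.re * a) ^ 2 + τ.im ^ 2 * (a : ℝ) ^ 2)) := by
    field_simp
  rw [h4]
  linarith [h2]

lemma pt1 (τ : ℂ) (ε ε' : ℝ) (a m : ℤ)
    (z₀ : ℂ) (hz : z₀ = (ε' : ℂ) + (ε : ℂ) * τ) :
    ((Real.exp (-(π * τ.im * ε ^ 2)) : ℝ) : ℂ) * jacobiTheta₂_term m z₀ τ *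
      conj (((Real.exp (-(π * τ.im * ε ^ 2)) : ℝ) : ℂ) * jacobiTheta₂_term (m + a) z₀ τ)
    = Complex.exp (-(π:ℂ) * I * (a:ℂ)^2 * conj τ - 2 * π * I * (a:ℂ) * conj z₀
        - 2 * π * (τ.im:ℂ) * (ε:ℂ)^2) *
      jacobiTheta₂_term m (-(a:ℂ) * conj τ + 2 * (ε:ℂ) * (τ.im:ℂ) * I) (2 * (τ.im:ℂ) * I) := by
  have hconjτ : conj τ = τ - 2 * (τ.im : ℂ) * I := by
    have sc := Complex.sub_conj τ
    push_cast at sc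
    linear_combination -sc
  have hz₀im : z₀.im = ε * τ.im := by
    simp [hz]
  have hconjz : conj z₀ = z₀ - 2 * (ε:ℂ) * (τ.im:ℂ) * I := by
    have sc := Complex.sub_conj z₀
    rw [hz₀im] at sc
    push_cast at sc
    linear_combination -sc
  simp only [jacobiTheta₂_term, map_mul, Complex.conj_ofReal, ← Complex.exp_conj, map_add,
    map_mul, map_pow, map_ofNat, Complex.conj_I, map_intCast, Complex.ofReal_exp]
  rw [← Complex.exp_add, ← Complex.exp_add, ← Complex.exp_add, ← Complex.exp_add]
  congr 1
  rw [hconjτ, hconjz]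
  push_cast
  ring

lemma pt2 (τ : ℂ) (hτ : 0 < τ.im) (ε ε' : ℝ) (a b : ℤ) (z₀ : ℂ)
    (hz : z₀ = (ε' : ℂ) + (ε : ℂ) * τ) :
    Complex.exp (((-(2 * Real.pi / τ.im) *
          (‖(b : ℂ) / 2 - conj τ * ((a : ℂ) / 2)‖) ^ 2 : ℝ) : ℂ)
        - 4 * (Real.pi : ℂ) * I * (((b : ℂ) / 2) * (ε : ℂ) + ((a : ℂ) / 2) * (ε' : ℂ))
        - (Real.pi : ℂ) * I * (a : ℂ) * (b : ℂ))
    = Complex.exp ((-(π:ℂ) * I * (a:ℂ)^2 * conj τ - 2 * π * I * (a:ℂ) * conj z₀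
          - 2 * π * (τ.im:ℂ) * (ε:ℂ)^2)
        + π * I * (I / (2 * (τ.im:ℂ))) * (-(a:ℂ) * conj τ + 2 * (ε:ℂ) * (τ.im:ℂ) * I)^2) *
      jacobiTheta₂_term b ((I / (2 * (τ.im:ℂ))) * (-(a:ℂ) * conj τ + 2 * (ε:ℂ) * (τ.im:ℂ) * I))
        (I / (2 * (τ.im:ℂ))) := by
  have ht0 : ((τ.im:ℝ):ℂ) ≠ 0 := Complex.ofReal_ne_zero.mpr (ne_of_gt hτ)
  have hconjτ : conj τ = τ - 2 * (τ.im : ℂ) * I := by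
    have sc := Complex.sub_conj τ
    push_cast at sc
    linear_combination -sc
  have hz₀im : z₀.im = ε * τ.im := by simp [hz]
  have hconjz : conj z₀ = z₀ - 2 * (ε:ℂ) * (τ.im:ℂ) * I := by
    have sc := Complex.sub_conj z₀
    rw [hz₀im] at sc
    push_cast at sc
    linear_combination -sc
  have habs : (((‖(b : ℂ) / 2 - conj τ * ((a : ℂ) / 2)‖) ^ 2 : ℝ) : ℂ)
      = ((b : ℂ) / 2 - conj τ * ((a : ℂ) / 2)) * ((b : ℂ) / 2 - τ * ((a : ℂ) / 2)) := by
    rw [Complex.sq_norm, ← Complex.mul_conj]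
    congr 1
    simp [map_ofNat]
  rw [jacobiTheta₂_term, ← Complex.exp_add]
  congr 1
  rw [Complex.ofReal_mul, habs, hconjτ, hconjz, hz]
  have h3 : (I:ℂ)^3 = -I := by rw [pow_succ, Complex.I_sq]; ring
  have h4 : (I:ℂ)^4 = 1 := Complex.I_pow_four
  push_cast
  field_simp
  ring_nf
  simp only [h3, h4, Complex.I_sq]
  ring_nf

lemma pt3 (τ : ℂ) (hτ : 0 < τ.im) (Dv w : ℂ) :
    Complex.exp (Dv + π * I * (I / (2 * (τ.im:ℂ))) * w ^ 2) *
      jacobiTheta₂ ((I / (2 * (τ.im:ℂ))) * w) (I / (2 * (τ.im:ℂ)))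
    = ((Real.sqrt (2 * τ.im) : ℝ) : ℂ) *
      (Complex.exp Dv * jacobiTheta₂ w (2 * (τ.im:ℂ) * I)) := by
  have ht0 : ((τ.im:ℝ):ℂ) ≠ 0 := Complex.ofReal_ne_zero.mpr (ne_of_gt hτ)
  set τ' : ℂ := I / (2 * (τ.im:ℂ)) with hτ'def
  have hτ'ne : τ' ≠ 0 := by
    rw [hτ'def]
    exact div_ne_zero Complex.I_ne_zero (by simpa using ht0)
  have key := jacobiTheta₂_functional_equation (τ' * w) τ'
  have h4 : τ' * w / τ' = w := by
    rw [mul_comm, mul_div_assoc, div_self hτ'ne, mul_one]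
  have h3 : -1 / τ' = 2 * (τ.im:ℂ) * I := by
    rw [hτ'def]
    rw [div_div_eq_mul_div, div_eq_iff Complex.I_ne_zero]
    linear_combination (-2 * (τ.im:ℂ)) * Complex.I_sq
  have e1 : -I * τ' = (((2 * τ.im)⁻¹ : ℝ) : ℂ) := by
    rw [hτ'def]
    push_cast
    linear_combination (-(1 / (2 * (τ.im:ℂ)))) * Complex.I_sq
  have h2 : (1:ℂ) / (-I * τ') ^ (1 / 2 : ℂ) = ((Real.sqrt (2 * τ.im) : ℝ) : ℂ) := by
    rw [e1, show ((1:ℂ)/2) = (((1:ℝ)/2 : ℝ):ℂ) by norm_num,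
      ← Complex.ofReal_cpow (by positivity), ← Real.sqrt_eq_rpow, Real.sqrt_inv]
    rw [Complex.ofReal_inv, one_div, inv_inv]
  rw [h4, h3, h2] at key
  rw [key]
  have hX : -↑π * I * (τ' * w) ^ 2 / τ' = -(↑π * I * τ' * w ^ 2) := by
    rw [hτ'def]
    field_simp
  rw [hX, Complex.exp_add]
  have hcan : cexp (↑π * I * τ' * w ^ 2) * cexp (-(↑π * I * τ' * w ^ 2)) = 1 := by
    rw [← Complex.exp_add, add_neg_cancel, Complex.exp_zero]
  linear_combination (((Real.sqrt (2 * τ.im) : ℝ) : ℂ) * jacobiTheta₂ w (2 * (τ.im:ℂ) * I) *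
    Complex.exp Dv) * hcan

end Stmt9

open Stmt9 in
/-- Poisson-summation evaluation of the instanton partition function of the
compactified free field on the torus `ℂ/(ℤ+τℤ)`: with `z₀ = ε' + ετ` and the sum
running over half-integers `n = a/2`, `m = b/2`,
`Σ exp(−(2π/Imτ)|m − conj(τ)n|² − 4πi(mε + nε') − 4πinm)
  = √(2 Im τ)·exp(−2π(Im z₀)²/Im τ)·|θ₃(z₀)|²`; the sum converges absolutely. -/
theorem stmt9 (τ : ℂ) (hτ : 0 < τ.im) (ε ε' : ℝ) :
    Summable (fun p : ℤ × ℤ => ‖Complex.exp (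
      ((-(2 * Real.pi / τ.im) *
          (‖(p.2 : ℂ) / 2 - (starRingEnd ℂ) τ * ((p.1 : ℂ) / 2)‖) ^ 2 : ℝ) : ℂ)
        - 4 * (Real.pi : ℂ) * Complex.I *
            (((p.2 : ℂ) / 2) * (ε : ℂ) + ((p.1 : ℂ) / 2) * (ε' : ℂ))
        - (Real.pi : ℂ) * Complex.I * (p.1 : ℂ) * (p.2 : ℂ))‖) ∧
    ∑' p : ℤ × ℤ, Complex.exp (
      ((-(2 * Real.pi / τ.im) *
          (‖(p.2 : ℂ) / 2 - (starRingEnd ℂ) τ * ((p.1 : ℂ) / 2)‖) ^ 2 : ℝ) : ℂ)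
        - 4 * (Real.pi : ℂ) * Complex.I *
            (((p.2 : ℂ) / 2) * (ε : ℂ) + ((p.1 : ℂ) / 2) * (ε' : ℂ))
        - (Real.pi : ℂ) * Complex.I * (p.1 : ℂ) * (p.2 : ℂ)) =
    ((Real.sqrt (2 * τ.im) *
        Real.exp (-2 * Real.pi * (((ε' : ℂ) + (ε : ℂ) * τ).im) ^ 2 / τ.im) *
        ‖jacobiTheta₂ ((ε' : ℂ) + (ε : ℂ) * τ) τ‖ ^ 2 : ℝ) : ℂ) := by
  refine ⟨summ τ hτ ε ε', ?_⟩
  set z₀ : ℂ := (ε' : ℂ) + (ε : ℂ) * τ with hz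
  have hz₀im : z₀.im = ε * τ.im := by simp [hz]
  set c₀ : ℝ := -(π * τ.im * ε ^ 2) with hc₀
  set f : ℤ → ℂ := fun n => ((Real.exp c₀ : ℝ) : ℂ) * jacobiTheta₂_term n z₀ τ with hfdef
  set g : ℤ → ℂ := fun k => conj (f k) with hgdef
  -- summability of f, g in norm
  have hfnorm : ∀ n : ℤ, ‖f n‖
      = Real.exp (c₀ + (-π * (n:ℝ)^2 * τ.im - 2*π*(n:ℝ)*(ε*τ.im))) := by
    intro n
    simp only [hfdef]
    rw [norm_mul, Complex.norm_real, Real.norm_eq_abs, Real.abs_exp,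
      norm_jacobiTheta₂_term, hz₀im, ← Real.exp_add]
  have hf : Summable fun n : ℤ => ‖f n‖ := by
    have hbd := summable_pow_mul_jacobiTheta₂_term_bound (τ.im * |ε|) hτ 0
    refine Summable.of_nonneg_of_le (fun _ => norm_nonneg _) (fun n => ?_) hbd
    rw [hfnorm n, pow_zero, one_mul, Real.exp_le_exp]
    have habs' := neg_abs_le ((n:ℝ) * ε)
    rw [abs_mul] at habs'
    have key0 : 0 ≤ ε ^ 2 + 2 * ((n : ℝ) * ε) + 2 * (|(n : ℝ)| * |ε|) := by nlinarith [sq_nonneg ε]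
    have key1 : 0 ≤ π * τ.im * (ε ^ 2 + 2 * ((n : ℝ) * ε) + 2 * (|(n : ℝ)| * |ε|)) :=
      mul_nonneg (mul_pos Real.pi_pos hτ).le key0
    rw [hc₀]
    push_cast
    nlinarith [key1]
  have hg : Summable fun k : ℤ => ‖g k‖ := by
    refine hf.congr fun k => ?_
    simp [hgdef]
  have hfg2 : Summable (fun p : ℤ × ℤ => f p.1 * g p.2) := summable_mul_of_summable_norm hf hg
  -- the reindexing equivalence
  let eqv : ℤ × ℤ ≃ ℤ × ℤ :=
    { toFun := fun p => (p.2, p.2 + p.1)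
      invFun := fun q => (q.2 - q.1, q.1)
      left_inv := fun p => by simp
      right_inv := fun q => by simp }
  have hW : Summable (fun p : ℤ × ℤ => f p.2 * g (p.2 + p.1)) :=
    (eqv.summable_iff (f := fun p : ℤ × ℤ => f p.1 * g p.2)).mpr hfg2
  have hreindex : ∑' p : ℤ × ℤ, f p.2 * g (p.2 + p.1) = ∑' p : ℤ × ℤ, f p.1 * g p.2 :=
    eqv.tsum_eq (fun p : ℤ × ℤ => f p.1 * g p.2)
  have hiter2 : ∑' p : ℤ × ℤ, f p.2 * g (p.2 + p.1)
      = ∑' a : ℤ, ∑' m : ℤ, f m * g (m + a) :=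
    Summable.tsum_prod' hW (fun a => hW.comp_injective (fun x y hxy => congrArg Prod.snd hxy))
  have hfinal_fg : (∑' n : ℤ, f n) * (∑' k : ℤ, g k) = ∑' p : ℤ × ℤ, f p.1 * g p.2 :=
    tsum_mul_tsum_of_summable_norm hf hg
  have hsum_f : ∑' n : ℤ, f n = ((Real.exp c₀ : ℝ) : ℂ) * jacobiTheta₂ z₀ τ := tsum_mul_left
  have hsum_g : ∑' k : ℤ, g k = conj (∑' n : ℤ, f n) := by
    simp only [hgdef, starRingEnd_apply]
    exact tsum_star.symm
  -- the (a,m)-sum equals cexp (D a) * θ(w a, 2tI)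
  have hm : ∀ a : ℤ, Complex.exp (-(π:ℂ) * I * (a:ℂ)^2 * conj τ - 2 * π * I * (a:ℂ) * conj z₀
        - 2 * π * (τ.im:ℂ) * (ε:ℂ)^2) *
      jacobiTheta₂ (-(a:ℂ) * conj τ + 2 * (ε:ℂ) * (τ.im:ℂ) * I) (2 * (τ.im:ℂ) * I)
      = ∑' m : ℤ, f m * g (m + a) := by
    intro a
    rw [tsum_congr (fun m : ℤ => show f m * g (m + a) = _ from pt1 τ ε ε' a m z₀ hz)]
    exact tsum_mul_left.symm
  -- the b-sum for fixed a
  have hT : Summable (fun p : ℤ × ℤ => Complex.exp (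
      ((-(2 * Real.pi / τ.im) *
          (‖(p.2 : ℂ) / 2 - (starRingEnd ℂ) τ * ((p.1 : ℂ) / 2)‖) ^ 2 : ℝ) : ℂ)
        - 4 * (Real.pi : ℂ) * Complex.I *
            (((p.2 : ℂ) / 2) * (ε : ℂ) + ((p.1 : ℂ) / 2) * (ε' : ℂ))
        - (Real.pi : ℂ) * Complex.I * (p.1 : ℂ) * (p.2 : ℂ))) := (summ τ hτ ε ε').of_norm
  have hsplit : ∑' p : ℤ × ℤ, Complex.exp (
      ((-(2 * Real.pi / τ.im) *
          (‖(p.2 : ℂ) / 2 - (starRingEnd ℂ) τ * ((p.1 : ℂ) / 2)‖) ^ 2 : ℝ) : ℂ)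
        - 4 * (Real.pi : ℂ) * Complex.I *
            (((p.2 : ℂ) / 2) * (ε : ℂ) + ((p.1 : ℂ) / 2) * (ε' : ℂ))
        - (Real.pi : ℂ) * Complex.I * (p.1 : ℂ) * (p.2 : ℂ))
      = ∑' a : ℤ, ∑' b : ℤ, Complex.exp (
      ((-(2 * Real.pi / τ.im) *
          (‖(b : ℂ) / 2 - (starRingEnd ℂ) τ * ((a : ℂ) / 2)‖) ^ 2 : ℝ) : ℂ)
        - 4 * (Real.pi : ℂ) * Complex.I *
            (((b : ℂ) / 2) * (ε : ℂ) + ((a : ℂ) / 2) * (ε' : ℂ))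
        - (Real.pi : ℂ) * Complex.I * (a : ℂ) * (b : ℂ)) :=
    Summable.tsum_prod' hT (fun a => hT.comp_injective (fun x y hxy => congrArg Prod.snd hxy))
  have hb : ∀ a : ℤ, ∑' b : ℤ, Complex.exp (
      ((-(2 * Real.pi / τ.im) *
          (‖(b : ℂ) / 2 - (starRingEnd ℂ) τ * ((a : ℂ) / 2)‖) ^ 2 : ℝ) : ℂ)
        - 4 * (Real.pi : ℂ) * Complex.I *
            (((b : ℂ) / 2) * (ε : ℂ) + ((a : ℂ) / 2) * (ε' : ℂ))
        - (Real.pi : ℂ) * Complex.I * (a : ℂ) * (b : ℂ))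
      = Complex.exp ((-(π:ℂ) * I * (a:ℂ)^2 * conj τ - 2 * π * I * (a:ℂ) * conj z₀
          - 2 * π * (τ.im:ℂ) * (ε:ℂ)^2)
        + π * I * (I / (2 * (τ.im:ℂ))) * (-(a:ℂ) * conj τ + 2 * (ε:ℂ) * (τ.im:ℂ) * I)^2) *
      jacobiTheta₂ ((I / (2 * (τ.im:ℂ))) * (-(a:ℂ) * conj τ + 2 * (ε:ℂ) * (τ.im:ℂ) * I))
        (I / (2 * (τ.im:ℂ))) := by
    intro a
    rw [tsum_congr (fun b : ℤ => pt2 τ hτ ε ε' a b z₀ hz)]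
    exact tsum_mul_left
  -- final RHS computation
  have hRHSval : ((Real.sqrt (2 * τ.im) *
        Real.exp (-2 * Real.pi * (z₀.im) ^ 2 / τ.im) *
        ‖jacobiTheta₂ z₀ τ‖ ^ 2 : ℝ) : ℂ)
      = ((Real.sqrt (2 * τ.im) : ℝ) : ℂ) * ((∑' n : ℤ, f n) * (∑' k : ℤ, g k)) := by
    rw [hsum_g, hsum_f, map_mul, Complex.conj_ofReal]
    have hmc : ((Real.exp c₀ : ℝ) : ℂ) * jacobiTheta₂ z₀ τ *
        (((Real.exp c₀ : ℝ) : ℂ) * conj (jacobiTheta₂ z₀ τ))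
        = ((Real.exp c₀ * Real.exp c₀ * Complex.normSq (jacobiTheta₂ z₀ τ) : ℝ) : ℂ) := by
      rw [mul_mul_mul_comm, Complex.mul_conj]
      push_cast
      ring
    rw [hmc, ← Complex.ofReal_mul]
    congr 1
    rw [Complex.sq_norm, hz₀im]
    have hexp2 : Real.exp (-2 * π * (ε * τ.im) ^ 2 / τ.im) = Real.exp c₀ * Real.exp c₀ := by
      rw [← Real.exp_add, hc₀]
      congr 1
      field_simp
      ring
    rw [hexp2]
    ring
  -- glue everything
  rw [hsplit]
  calc ∑' a : ℤ, ∑' b : ℤ, Complex.exp (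
      ((-(2 * Real.pi / τ.im) *
          (‖(b : ℂ) / 2 - (starRingEnd ℂ) τ * ((a : ℂ) / 2)‖) ^ 2 : ℝ) : ℂ)
        - 4 * (Real.pi : ℂ) * Complex.I *
            (((b : ℂ) / 2) * (ε : ℂ) + ((a : ℂ) / 2) * (ε' : ℂ))
        - (Real.pi : ℂ) * Complex.I * (a : ℂ) * (b : ℂ))
      = ∑' a : ℤ, ((Real.sqrt (2 * τ.im) : ℝ) : ℂ) * ∑' m : ℤ, f m * g (m + a) := by
        refine tsum_congr fun a => ?_
        rw [hb a, pt3 τ hτ _ _, hm a]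
    _ = ((Real.sqrt (2 * τ.im) : ℝ) : ℂ) * ∑' a : ℤ, ∑' m : ℤ, f m * g (m + a) :=
        tsum_mul_left
    _ = ((Real.sqrt (2 * τ.im) : ℝ) : ℂ) * ((∑' n : ℤ, f n) * (∑' k : ℤ, g k)) := by
        rw [← hiter2, hreindex, hfinal_fg]
    _ = _ := hRHSval.symm

end
end

section
/- Let n ≥ 1, let x_1, …, x_n, y_1, …, y_n ∈ ℂ, let s_1, …, s_n ∈ ℝ, and let w ∈ ℂ be distinct from every x_j and every y_j. For z ≠ w near w define the multi-puncture Cauchy kernel S(z) = (1/(π(z−w))) · ∏_{j=1}^n exp( s_j · Log( ((z−x_j)(w−y_j)) / ((z−y_j)(w−x_j)) ) ), where Log is the principal branch of the complex logarithm (the argument of each Log tends to 1 as z → w, so S is well defined near w). Then the Robin kernel is given by: lim_{z → w, z ≠ w} [ S(z) − 1/(π(z−w)) ] = (1/π) Σ_{j=1}^n s_j ( 1/(w−x_j) − 1/(w−y_j) ). (This is the near-diagonal expansion S(z,w) = 1/(π(z−w)) + r_ρ(w) + O(z−w) of the continuum kernel inverting ∂̄ on the line bundle over ℂ∖{x_1,…,y_n}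 with multiplicative monodromy e^{2π i s_j} around x_j and e^{−2π i s_j} around y_j, which governs the variation of electric vertex correlators; for s_j ≡ ½ it is the kernel governing monomer correlations.) -/
open Filter Topology

/-- Robin kernel of the multi-puncture Cauchy kernel: with
`S(z) = (1/(π(z−w)))·∏_j exp(s_j·Log(((z−x_j)(w−y_j))/((z−y_j)(w−x_j))))`
(principal branch `Log`), one has the near-diagonal expansion
`lim_{z→w} [S(z) − 1/(π(z−w))] = (1/π) Σ_j s_j (1/(w−x_j) − 1/(w−y_j))`. -/
theorem stmt11 (n : ℕ) (hn : 1 ≤ n) (x y : Fin n → ℂ) (s : Fin n → ℝ) (w : ℂ)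
    (hx : ∀ j, w ≠ x j) (hy : ∀ j, w ≠ y j) :
    Tendsto
      (fun z : ℂ =>
        (1 / ((Real.pi : ℂ) * (z - w))) *
            ∏ j, Complex.exp ((s j : ℂ) *
              Complex.log (((z - x j) * (w - y j)) / ((z - y j) * (w - x j)))) -
          1 / ((Real.pi : ℂ) * (z - w)))
      (𝓝[≠] w)
      (𝓝 ((1 / (Real.pi : ℂ)) *
        ∑ j, (s j : ℂ) * (1 / (w - x j) - 1 / (w - y j)))) := by
  have hπ : (Real.pi : ℂ) ≠ 0 := by exact_mod_cast Real.pi_ne_zero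
  have hxj : ∀ j, w - x j ≠ 0 := fun j => sub_ne_zero.mpr (hx j)
  have hyj : ∀ j, w - y j ≠ 0 := fun j => sub_ne_zero.mpr (hy j)
  set F : ℂ → ℂ := fun z => ∏ j, Complex.exp ((s j : ℂ) *
      Complex.log (((z - x j) * (w - y j)) / ((z - y j) * (w - x j)))) with hF
  have hq : ∀ j, ((w - x j) * (w - y j)) / ((w - y j) * (w - x j)) = 1 := by
    intro j; rw [mul_comm]; exact div_self (mul_ne_zero (hyj j) (hxj j))
  have hFw : F w = 1 := by
    simp [hF, hq, Complex.log_one]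
  have hderiv : HasDerivAt F (∑ j, (s j : ℂ) * (1 / (w - x j) - 1 / (w - y j))) w := by
    have hFeq : F = fun z => Complex.exp (∑ j, (s j : ℂ) *
        Complex.log (((z - x j) * (w - y j)) / ((z - y j) * (w - x j)))) :=
      funext fun z => (Complex.exp_sum _ _).symm
    rw [hFeq]
    have h1 : HasDerivAt (fun z => ∑ j, (s j : ℂ) *
        Complex.log (((z - x j) * (w - y j)) / ((z - y j) * (w - x j))))
        (∑ j, (s j : ℂ) * (1 / (w - x j) - 1 / (w - y j))) w := by
      apply HasDerivAt.fun_sum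
      intro j _
      have hq' : HasDerivAt (fun z => ((z - x j) * (w - y j)) / ((z - y j) * (w - x j)))
          (1 / (w - x j) - 1 / (w - y j)) w := by
        have hnum : HasDerivAt (fun z => (z - x j) * (w - y j)) (w - y j) w := by
          simpa using ((hasDerivAt_id w).sub_const (x j)).mul_const (w - y j)
        have hden : HasDerivAt (fun z => (z - y j) * (w - x j)) (w - x j) w := by
          simpa using ((hasDerivAt_id w).sub_const (y j)).mul_const (w - x j)
        have h : HasDerivAt (fun z => ((z - x j) * (w - y j)) / ((z - y j) * (w - x j))) _ w :=
          hnum.div hden (mul_ne_zero (hyj j) (hxj j))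
        convert h using 1
        rw [div_sub_div _ _ (hxj j) (hyj j),
          div_eq_div_iff (mul_ne_zero (hxj j) (hyj j))
            (pow_ne_zero 2 (mul_ne_zero (hyj j) (hxj j)))]
        ring
      have hmem : ((w - x j) * (w - y j)) / ((w - y j) * (w - x j)) ∈ Complex.slitPlane := by
        rw [hq j]; exact Complex.one_mem_slitPlane
      have hlog := (Complex.hasDerivAt_log hmem).comp w hq'
      have hlog' : HasDerivAt
          (fun z => Complex.log (((z - x j) * (w - y j)) / ((z - y j) * (w - x j))))
          (1 / (w - x j) - 1 / (w - y j)) w := by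
        simp [hq j, Function.comp] at hlog; simp only [one_div]; exact hlog
      simpa using hlog'.const_mul (s j : ℂ)
    have h2 := h1.cexp
    simpa [hq, Complex.log_one] using h2
  have hslope : Tendsto (slope F w) (𝓝[≠] w)
      (𝓝 (∑ j, (s j : ℂ) * (1 / (w - x j) - 1 / (w - y j)))) :=
    hasDerivAt_iff_tendsto_slope.mp hderiv
  have hmul := hslope.const_mul (1 / (Real.pi : ℂ))
  refine Tendsto.congr' ?_ hmul
  filter_upwards [self_mem_nhdsWithin] with z hz
  have hzw : z - w ≠ 0 := sub_ne_zero.mpr hz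
  simp only [slope_def_field, hFw]
  field_simp
  rfl
end

section
/- Let s ∈ (0,1), let x, y ∈ ℂ with x ≠ y, and let g : ℂ → ℂ be holomorphic on ℂ ∖ {x, y}. Suppose there is a constant C such that |z − x|^s · |z − y|^{−s} · |g(z)| ≤ C for all z ∈ ℂ ∖ {x, y}. Then g(z) = 0 for all z ∈ ℂ ∖ {x, y}. (Equivalently: there is no nonzero bounded holomorphic function on the twice-punctured plane ℂ ∖ {x,y} with multiplicative monodromy e^{2π i s} around x and e^{−2π i s} around y; such a function would be f(z) = ((z−x)/(z−y))^s g(z). This uniqueness pins down the continuum kernel ∂_w G_ρ(z,w) = ((z−x)/(w−x))^s ((z−y)/(w−y))^{1−s} / (π(z−w)) for the twisted Green function.) -/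
open Filter Topology

/-- There is no nonzero bounded holomorphic section with monodromy `e^{2πis}` around `x`
and `e^{−2πis}` around `y` on the twice-punctured plane: if `g` is holomorphic on
`ℂ ∖ {x, y}` and `|z−x|^s·|z−y|^{−s}·|g(z)|` is bounded, then `g ≡ 0` there. -/
theorem stmt12 (s : ℝ) (hs : s ∈ Set.Ioo (0 : ℝ) 1) (x y : ℂ) (hxy : x ≠ y)
    (g : ℂ → ℂ) (hg : ∀ z ∈ ({x, y}ᶜ : Set ℂ), DifferentiableAt ℂ g z)
    (C : ℝ)
    (hC : ∀ z ∈ ({x, y}ᶜ : Set ℂ),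
      ‖z - x‖ ^ s * ‖z - y‖ ^ (-s) * ‖g z‖ ≤ C) :
    ∀ z ∈ ({x, y}ᶜ : Set ℂ), g z = 0 := by
  obtain ⟨hs0, hs1⟩ := hs
  have hmem : ∀ z : ℂ, z ≠ x → z ≠ y → z ∈ ({x, y}ᶜ : Set ℂ) := by
    intro z h1 h2; simp [h1, h2]
  -- the pointwise bound in a usable form
  have habs : ∀ z : ℂ, z ≠ x → z ≠ y →
      ‖g z‖ ≤ C * (‖z - x‖ ^ s)⁻¹ * ‖z - y‖ ^ s := by
    intro z h1 h2
    have hax : (0:ℝ) < ‖z - x‖ := norm_pos_iff.mpr (sub_ne_zero.2 h1)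
    have hay : (0:ℝ) < ‖z - y‖ := norm_pos_iff.mpr (sub_ne_zero.2 h2)
    have hx' : (0:ℝ) < ‖z - x‖ ^ s := Real.rpow_pos_of_pos hax s
    have hy' : (0:ℝ) < ‖z - y‖ ^ s := Real.rpow_pos_of_pos hay s
    have h := hC z (hmem z h1 h2)
    rw [Real.rpow_neg (norm_nonneg _)] at h
    have h2' := mul_le_mul_of_nonneg_left h
      (le_of_lt (mul_pos (inv_pos.2 hx') hy'))
    calc ‖g z‖
        = ((‖z-x‖ ^ s)⁻¹ * ‖z-y‖ ^ s) *
          (‖z-x‖ ^ s * (‖z-y‖ ^ s)⁻¹ * ‖g z‖) := by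
          field_simp
      _ ≤ ((‖z-x‖ ^ s)⁻¹ * ‖z-y‖ ^ s) * C := h2'
      _ = C * (‖z-x‖ ^ s)⁻¹ * ‖z-y‖ ^ s := by ring
  have hC0 : 0 ≤ C := by
    have hz1 : (2*x - y : ℂ) ≠ x := by
      intro h; apply hxy; linear_combination h
    have hz2 : (2*x - y : ℂ) ≠ y := by
      intro h; apply hxy; linear_combination (h : (2*x - y : ℂ) = y)/2
    have := hC _ (hmem _ hz1 hz2)
    refine le_trans ?_ this
    positivity
  -- g tends to 0 at y
  have hy0 : Tendsto g (𝓝[≠] y) (𝓝 0) := by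
    have hbx : Tendsto (fun z : ℂ => C * (‖z - x‖ ^ s)⁻¹)
        (𝓝 y) (𝓝 (C * (‖y - x‖ ^ s)⁻¹)) := by
      have h1 : Tendsto (fun z : ℂ => ‖z - x‖) (𝓝 y) (𝓝 (‖y - x‖)) :=
        (continuous_norm.comp (continuous_id.sub continuous_const)).tendsto y
      have h2 : ContinuousAt (fun t : ℝ => t ^ s) (‖y - x‖) :=
        Real.continuousAt_rpow_const _ s
          (Or.inl (ne_of_gt (norm_pos_iff.mpr (sub_ne_zero.2 hxy.symm))))
      exact tendsto_const_nhds.mul ((h2.tendsto.comp h1).inv₀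
        (ne_of_gt (Real.rpow_pos_of_pos (norm_pos_iff.mpr (sub_ne_zero.2 hxy.symm)) s)))
    have hby : Tendsto (fun z : ℂ => ‖z - y‖ ^ s) (𝓝 y) (𝓝 0) := by
      have h1 : Tendsto (fun z : ℂ => ‖z - y‖) (𝓝 y) (𝓝 0) := by
        have h0 : Tendsto (fun z : ℂ => ‖z - y‖) (𝓝 y) (𝓝 (‖y - y‖)) :=
          (continuous_norm.comp (continuous_id.sub continuous_const)).tendsto y
        simpa using h0
      have h2 : ContinuousAt (fun t : ℝ => t ^ s) 0 :=
        Real.continuousAt_rpow_const 0 s (Or.inr hs0.le)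
      have := h2.tendsto.comp h1
      simpa [Function.comp_def, Real.zero_rpow hs0.ne'] using this
    have hlim : Tendsto (fun z : ℂ => C * (‖z - x‖ ^ s)⁻¹ * ‖z - y‖ ^ s)
        (𝓝[≠] y) (𝓝 0) := by
      have := (hbx.mul hby).mono_left (nhdsWithin_le_nhds : 𝓝[≠] y ≤ 𝓝 y)
      simpa using this
    refine squeeze_zero_norm' ?_ hlim
    have hevx : ∀ᶠ z in 𝓝[≠] y, z ≠ x :=
      eventually_nhdsWithin_of_eventually_nhds (eventually_ne_nhds hxy.symm)
    have hevy : ∀ᶠ z in 𝓝[≠] y, z ≠ y := eventually_mem_nhdsWithin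
    filter_upwards [hevx, hevy] with z h1 h2
    simpa using habs z h1 h2
  -- remove the singularity at y
  set g1 : ℂ → ℂ := Function.update g y 0 with hg1def
  have hyx : y ≠ x := hxy.symm
  have hg1 : DifferentiableOn ℂ g1 {x}ᶜ := by
    rw [← Complex.differentiableOn_compl_singleton_and_continuousAt_iff
      (c := y) (isOpen_compl_singleton.mem_nhds (by simpa using hyx))]
    constructor
    · intro z hz
      obtain ⟨hz1, hz2⟩ : z ≠ x ∧ z ≠ y := by
        constructor
        · simpa using hz.1
        · simpa using hz.2
      have hd := hg z (hmem z hz1 hz2)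
      have heq : g1 =ᶠ[𝓝 z] g := by
        filter_upwards [eventually_ne_nhds hz2] with w hw
        simp [hg1def, Function.update_of_ne hw]
      exact (heq.differentiableAt_iff.2 hd).differentiableWithinAt
    · rw [continuousAt_update_same]
      exact hy0
  -- the bound transfers to g1 on the punctured plane
  have habs1 : ∀ z : ℂ, z ≠ x → z ≠ y →
      ‖g1 z‖ ≤ C * (‖z - x‖ ^ s)⁻¹ * ‖z - y‖ ^ s := by
    intro z h1 h2
    rw [hg1def, Function.update_of_ne h2]
    exact habs z h1 h2
  -- littleO condition at x
  have hevx' : ∀ᶠ z in 𝓝[≠] x, z ≠ y :=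
    eventually_nhdsWithin_of_eventually_nhds (eventually_ne_nhds hxy)
  have hevx'' : ∀ᶠ z in 𝓝[≠] x, z ≠ x := eventually_mem_nhdsWithin
  have ho1 : (fun z : ℂ => g1 z) =o[𝓝[≠] x] fun z => (z - x)⁻¹ := by
    rw [Asymptotics.isLittleO_iff_tendsto' (by
      filter_upwards [hevx''] with z hz h
      exact absurd h (inv_ne_zero (sub_ne_zero.2 hz)))]
    have hbnd : Tendsto (fun z : ℂ =>
        C * ‖z - x‖ ^ (1 - s) * ‖z - y‖ ^ s) (𝓝[≠] x) (𝓝 0) := by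
      have h1 : Tendsto (fun z : ℂ => ‖z - x‖ ^ (1 - s)) (𝓝 x) (𝓝 0) := by
        have ha : Tendsto (fun z : ℂ => ‖z - x‖) (𝓝 x) (𝓝 0) := by
          have h0 : Tendsto (fun z : ℂ => ‖z - x‖) (𝓝 x) (𝓝 (‖x - x‖)) :=
            (continuous_norm.comp (continuous_id.sub continuous_const)).tendsto x
          simpa using h0
        have h2 : ContinuousAt (fun t : ℝ => t ^ (1 - s)) 0 :=
          Real.continuousAt_rpow_const 0 _ (Or.inr (by linarith))
        have := h2.tendsto.comp ha
        simpa [Function.comp_def, Real.zero_rpow (by linarith : (1:ℝ) - s ≠ 0)] using this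
      have h2 : Tendsto (fun z : ℂ => ‖z - y‖ ^ s) (𝓝 x)
          (𝓝 (‖x - y‖ ^ s)) := by
        have ha : Tendsto (fun z : ℂ => ‖z - y‖) (𝓝 x) (𝓝 (‖x - y‖)) :=
          (continuous_norm.comp (continuous_id.sub continuous_const)).tendsto x
        have hc : ContinuousAt (fun t : ℝ => t ^ s) (‖x - y‖) :=
          Real.continuousAt_rpow_const _ s (Or.inr hs0.le)
        exact hc.tendsto.comp ha
      have := ((tendsto_const_nhds (x := C)).mul h1).mul h2
      simpa using this.mono_left (nhdsWithin_le_nhds : 𝓝[≠] x ≤ 𝓝 x)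
    refine squeeze_zero_norm' ?_ hbnd
    filter_upwards [hevx', hevx''] with z h2 h1
    have hax : (0:ℝ) < ‖z - x‖ := norm_pos_iff.mpr (sub_ne_zero.2 h1)
    have key : ‖g1 z‖ * ‖z - x‖ ≤
        C * ‖z - x‖ ^ (1 - s) * ‖z - y‖ ^ s := by
      have hb := habs1 z h1 h2
      have := mul_le_mul_of_nonneg_right hb (norm_nonneg (z - x))
      refine this.trans_eq ?_
      have : (‖z - x‖ ^ s)⁻¹ * ‖z - x‖
          = ‖z - x‖ ^ (1 - s) := by
        rw [← Real.rpow_neg hax.le, show (1:ℝ) - s = -s + 1 by ring,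
          Real.rpow_add hax, Real.rpow_one]
      calc C * (‖z - x‖ ^ s)⁻¹ * ‖z - y‖ ^ s * ‖z - x‖
          = C * ((‖z - x‖ ^ s)⁻¹ * ‖z - x‖) * ‖z - y‖ ^ s := by
            ring
        _ = C * ‖z - x‖ ^ (1 - s) * ‖z - y‖ ^ s := by rw [this]
    calc ‖g1 z / (z - x)⁻¹‖ = ‖g1 z‖ * ‖z - x‖ := by
          rw [div_eq_mul_inv, inv_inv]; simp
      _ ≤ C * ‖z - x‖ ^ (1 - s) * ‖z - y‖ ^ s := key
  have ho2 : (fun _ : ℂ => g1 x) =o[𝓝[≠] x] fun z => (z - x)⁻¹ := by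
    rw [Asymptotics.isLittleO_const_left]
    right
    have h1 : Tendsto (fun z : ℂ => ‖z - x‖) (𝓝[≠] x) (𝓝[>] 0) := by
      rw [tendsto_nhdsWithin_iff]
      constructor
      · have h0 : Tendsto (fun z : ℂ => ‖z - x‖) (𝓝 x) (𝓝 (‖x - x‖)) :=
          (continuous_norm.comp (continuous_id.sub continuous_const)).tendsto x
        simpa using h0.mono_left (nhdsWithin_le_nhds : 𝓝[≠] x ≤ 𝓝 x)
      · filter_upwards [hevx''] with z hz
        exact norm_pos_iff.mpr (sub_ne_zero.2 hz)
    have := tendsto_inv_nhdsGT_zero.comp h1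
    refine this.congr fun z => ?_
    simp [Function.comp]
  have ho : (fun z : ℂ => g1 z - g1 x) =o[𝓝[≠] x] fun z => (z - x)⁻¹ := ho1.sub ho2
  -- remove the singularity at x
  set G : ℂ → ℂ := Function.update g1 x (limUnder (𝓝[≠] x) g1) with hGdef
  have hGdiff : Differentiable ℂ G := by
    rw [← differentiableOn_univ]
    exact Complex.differentiableOn_update_limUnder_of_isLittleO univ_mem
      (hg1.mono (by intro z hz; simpa using hz.2)) ho
  -- G agrees with g off {x, y}
  have hGeq : ∀ z : ℂ, z ≠ x → z ≠ y → G z = g z := by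
    intro z h1 h2
    rw [hGdef, Function.update_of_ne h1, hg1def, Function.update_of_ne h2]
  -- G is bounded
  have hbdd : Bornology.IsBounded (Set.range G) := by
    set R : ℝ := ‖x‖ + ‖x - y‖ + 1 with hRdef
    obtain ⟨M, hM⟩ := (isCompact_closedBall (0:ℂ) R).exists_bound_of_continuousOn
      hGdiff.continuous.continuousOn
    rw [isBounded_iff_forall_norm_le]
    refine ⟨max M (C * 2 ^ s), ?_⟩
    rintro _ ⟨z, rfl⟩
    by_cases hz : z ∈ Metric.closedBall (0:ℂ) R
    · exact le_max_of_le_left (hM z hz)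
    · refine le_max_of_le_right ?_
      have hzR : R < ‖z‖ := by
        simpa [Complex.dist_eq] using hz
      have hd : ‖x - y‖ + 1 ≤ ‖z - x‖ := by
        have h1 : ‖z‖ - ‖x‖ ≤ ‖z - x‖ := by
          have := norm_sub_norm_le z x
          linarith
        have : ‖x - y‖ + 1 ≤ ‖z‖ - ‖x‖ := by
          rw [hRdef] at hzR; linarith
        simpa using this.trans h1
      have h1 : z ≠ x := by
        intro h; rw [h] at hd; simp at hd
        have := norm_nonneg (x - y); linarith
      have h2 : z ≠ y := by
        intro h
        rw [h] at hd
        have : ‖y - x‖ = ‖x - y‖ := by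
          rw [norm_sub_rev]
        rw [this] at hd; linarith
      have hax : (0:ℝ) < ‖z - x‖ := norm_pos_iff.mpr (sub_ne_zero.2 h1)
      have hzy : ‖z - y‖ ≤ 2 * ‖z - x‖ := by
        have : ‖z - y‖ ≤ ‖z - x‖ + ‖x - y‖ := by
          have := norm_add_le (z - x) (x - y)
          simpa using this
        linarith
      have hrw : ‖z - y‖ ^ s ≤ 2 ^ s * ‖z - x‖ ^ s := by
        have := Real.rpow_le_rpow (norm_nonneg _) hzy hs0.le
        rwa [Real.mul_rpow (by norm_num) hax.le] at this
      have hb := habs z h1 h2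
      rw [hGeq z h1 h2]
      calc ‖g z‖ = ‖g z‖ := rfl
        _ ≤ C * (‖z - x‖ ^ s)⁻¹ * ‖z - y‖ ^ s := hb
        _ ≤ C * (‖z - x‖ ^ s)⁻¹ * (2 ^ s * ‖z - x‖ ^ s) := by
            have h0 : (0:ℝ) ≤ C * (‖z - x‖ ^ s)⁻¹ := by positivity
            exact mul_le_mul_of_nonneg_left hrw h0
        _ = C * 2 ^ s := by
            have hpos : (0:ℝ) < ‖z - x‖ ^ s := Real.rpow_pos_of_pos hax s
            field_simp
  -- Liouville: G is constant, and G y = 0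
  have hGy : G y = 0 := by
    rw [hGdef, Function.update_of_ne hyx, hg1def, Function.update_self]
  intro z hz
  obtain ⟨h1, h2⟩ : z ≠ x ∧ z ≠ y := by
    constructor
    · intro h; exact hz (by simp [h])
    · intro h; exact hz (by simp [h])
  have := hGdiff.apply_eq_apply_of_bounded hbdd z y
  rw [hGy, hGeq z h1 h2] at this
  exact this
end
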